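/- Product formula for Γ₂: for bounded sets K₁ ⊆ ℝ^{d₁} and K₂ ⊆ ℝ^{d₂}, Γ₂(K₁ × K₂) = Γ₂(K₁) + Γ₂(K₂), where K₁ × K₂ := {(x,y) : x ∈ K₁, y ∈ K₂} ⊆ ℝ^{d₁+d₂}. -/

import Mathlib

open scoped ENNReal
open MeasureTheory ProbabilityTheory Matrix Set Bornology

/-- The `ℓ_p` norm of a finite-dimensional real vector, `p ∈ [1,∞]`. -/
noncomputable def pnorm (p : ℝ≥0∞) {ι : Type*} [Fintype ι] (x : ι → ℝ) : ℝ :=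
  if p = ∞ then ⨆ i, |x i| else (∑ i, |x i| ^ p.toReal) ^ (1 / p.toReal)

/-- `tr_p M`: the `ℓ_p` norm of the diagonal of a square matrix. -/
noncomputable def trp (p : ℝ≥0∞) {ι : Type*} [Fintype ι] (M : Matrix ι ι ℝ) : ℝ :=
  pnorm p (fun i => M i i)

/-- The closed Euclidean unit ball. -/
def ball2 (ι : Type*) [Fintype ι] : Set (ι → ℝ) := {x | ∑ i, (x i) ^ 2 ≤ 1}

/-- `Γ_p(K) = inf { sqrt(tr_{p/2}(A Aᵀ)) : ∃ v, K + v ⊆ A · B₂ }`. -/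
noncomputable def Gamma (p : ℝ≥0∞) {ι : Type*} [Fintype ι] [DecidableEq ι]
    (K : Set (ι → ℝ)) : ℝ :=
  sInf {r : ℝ | ∃ A : Matrix ι ι ℝ,
    r = Real.sqrt (trp (p / 2) (A * Aᵀ)) ∧
    ∃ v : ι → ℝ, (fun x => x + v) '' K ⊆ (fun x => A.mulVec x) '' ball2 ι}

/-- The support function `h_K(θ) = sup_{x ∈ K} ⟨x, θ⟩`. -/
noncomputable def suppFn {ι : Type*} [Fintype ι] (K : Set (ι → ℝ)) (θ : ι → ℝ) : ℝ :=
  sSup ((fun x => ∑ i, x i * θ i) '' K)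

/-- The width function `w_K(θ) = sup_{x ∈ K} ⟨x, θ⟩ - inf_{x ∈ K} ⟨x, θ⟩`. -/
noncomputable def widthFn {ι : Type*} [Fintype ι] (K : Set (ι → ℝ)) (θ : ι → ℝ) : ℝ :=
  sSup ((fun x => ∑ i, x i * θ i) '' K) - sInf ((fun x => ∑ i, x i * θ i) '' K)

set_option maxHeartbeats 1000000
set_option linter.unusedSectionVars false

/-! ### Basic lemmas -/

lemma trp_one {ι : Type*} [Fintype ι] (M : Matrix ι ι ℝ) :
    trp 1 M = ∑ i, |M i i| := by
  simp [trp, pnorm]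

lemma trp_one_nonneg {ι : Type*} [Fintype ι] (M : Matrix ι ι ℝ) :
    0 ≤ trp 1 M := by
  rw [trp_one]; positivity

def GS {ι : Type*} [Fintype ι] [DecidableEq ι] (K : Set (ι → ℝ)) : Set ℝ :=
  {r : ℝ | ∃ A : Matrix ι ι ℝ,
    r = Real.sqrt (trp 1 (A * Aᵀ)) ∧
    ∃ v : ι → ℝ, (fun x => x + v) '' K ⊆ (fun x => A.mulVec x) '' ball2 ι}

lemma Gamma_two_eq {ι : Type*} [Fintype ι] [DecidableEq ι] (K : Set (ι → ℝ)) :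
    Gamma 2 K = sInf (GS K) := by
  have : (2 : ℝ≥0∞) / 2 = 1 := by
    rw [ENNReal.div_eq_one_iff] <;> norm_num
  rw [Gamma, this]; rfl

lemma GS_nonneg {ι : Type*} [Fintype ι] [DecidableEq ι] {K : Set (ι → ℝ)} {r : ℝ}
    (h : r ∈ GS K) : 0 ≤ r := by
  obtain ⟨A, rfl, -⟩ := h; exact Real.sqrt_nonneg _

lemma GS_bddBelow {ι : Type*} [Fintype ι] [DecidableEq ι] (K : Set (ι → ℝ)) :
    BddBelow (GS K) := ⟨0, fun _ h => GS_nonneg h⟩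

lemma GS_nonempty {ι : Type*} [Fintype ι] [DecidableEq ι] {K : Set (ι → ℝ)}
    (hK : IsBounded K) : (GS K).Nonempty := by
  obtain ⟨R, hR⟩ := (Metric.isBounded_iff_subset_closedBall 0).1 hK
  set R' : ℝ := max R 0 with hR'def
  set m : ℝ := R' + 1 with hmdef
  have hm : 0 < m := by positivity
  set d : ℕ := Fintype.card ι
  set s : ℝ := (Real.sqrt d + 1) * m with hsdef
  have hs : 0 < s := by positivity
  refine ⟨_, s • (1 : Matrix ι ι ℝ), rfl, 0, ?_⟩
  rintro _ ⟨x, hx, rfl⟩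
  have hxball : x ∈ Metric.closedBall (0 : ι → ℝ) R := hR hx
  have hxnorm : ‖x‖ ≤ R' := by
    have := Metric.mem_closedBall.1 hxball
    rw [dist_eq_norm, sub_zero] at this
    exact this.trans (le_max_left _ _)
  refine ⟨s⁻¹ • (x + 0), ?_, ?_⟩
  · show ∑ i, ((s⁻¹ • (x + 0)) i) ^ 2 ≤ 1
    have hcoord : ∀ i, ((x + 0) i) ^ 2 ≤ m ^ 2 := by
      intro i
      have h1 : |x i| ≤ R' := by
        simpa using (norm_le_pi_norm x i).trans hxnorm
      have : |x i| ≤ m := h1.trans (by simp [hmdef])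
      simpa [sq_abs] using pow_le_pow_left₀ (abs_nonneg _) this 2
    have hsum : ∑ i, ((x + 0) i) ^ 2 ≤ d * m ^ 2 := by
      calc ∑ i, ((x + 0) i) ^ 2 ≤ ∑ _i : ι, m ^ 2 := Finset.sum_le_sum fun i _ => hcoord i
        _ = d * m ^ 2 := by simp [mul_comm]; exact Or.inl rfl
    have : ∑ i, ((s⁻¹ • (x + 0)) i) ^ 2 = s⁻¹ ^ 2 * ∑ i, ((x + 0) i) ^ 2 := by
      simp [Finset.mul_sum, mul_pow]
    rw [this]
    have hd : (d : ℝ) * m ^ 2 ≤ s ^ 2 := by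
      have h1 : (d : ℝ) ≤ (Real.sqrt d + 1) ^ 2 := by
        nlinarith [Real.sq_sqrt (Nat.cast_nonneg d : (0:ℝ) ≤ d), Real.sqrt_nonneg (d : ℝ)]
      calc (d : ℝ) * m ^ 2 ≤ (Real.sqrt d + 1) ^ 2 * m ^ 2 := by nlinarith
        _ = s ^ 2 := by rw [hsdef]; ring
    rw [inv_pow, inv_mul_le_iff₀ (by positivity)]
    calc ∑ i, ((x + 0) i) ^ 2 ≤ (d:ℝ) * m ^ 2 := hsum
      _ ≤ s ^ 2 := hd
      _ ≤ s ^ 2 * 1 := by linarith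
  · show (s • (1 : Matrix ι ι ℝ)).mulVec (s⁻¹ • (x + 0)) = x + 0
    rw [Matrix.smul_mulVec, Matrix.one_mulVec, smul_smul,
      mul_inv_cancel₀ hs.ne', one_smul]

lemma Gamma_two_le {ι : Type*} [Fintype ι] [DecidableEq ι] {K : Set (ι → ℝ)} {r : ℝ}
    (h : r ∈ GS K) : Gamma 2 K ≤ r := by
  rw [Gamma_two_eq]; exact csInf_le (GS_bddBelow K) h

lemma Gamma_two_nonneg {ι : Type*} [Fintype ι] [DecidableEq ι] (K : Set (ι → ℝ))
    (hK : IsBounded K) : 0 ≤ Gamma 2 K := by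
  rw [Gamma_two_eq]
  exact le_csInf (GS_nonempty hK) fun r h => GS_nonneg h

section Upper

variable {ι₁ ι₂ : Type*} [Fintype ι₁] [Fintype ι₂] [DecidableEq ι₁] [DecidableEq ι₂]

def prodSet (K₁ : Set (ι₁ → ℝ)) (K₂ : Set (ι₂ → ℝ)) : Set ((ι₁ ⊕ ι₂) → ℝ) :=
  {z | (fun i => z (Sum.inl i)) ∈ K₁ ∧ (fun j => z (Sum.inr j)) ∈ K₂}

lemma GS_prod_mem {K₁ : Set (ι₁ → ℝ)} {K₂ : Set (ι₂ → ℝ)} {r₁ r₂ : ℝ}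
    (h₁ : r₁ ∈ GS K₁) (h₂ : r₂ ∈ GS K₂) {δ : ℝ} (hδ : 0 < δ) :
    ∃ r ∈ GS (prodSet K₁ K₂), r ≤ r₁ + r₂ + 2 * δ := by
  obtain ⟨A₁, rfl, v₁, hA₁⟩ := h₁
  obtain ⟨A₂, rfl, v₂, hA₂⟩ := h₂
  set a₁ : ℝ := Real.sqrt (trp 1 (A₁ * A₁ᵀ)) with ha₁def
  set a₂ : ℝ := Real.sqrt (trp 1 (A₂ * A₂ᵀ)) with ha₂def
  have ha₁ : 0 ≤ a₁ := Real.sqrt_nonneg _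
  have ha₂ : 0 ≤ a₂ := Real.sqrt_nonneg _
  have ha₁sq : a₁ ^ 2 = trp 1 (A₁ * A₁ᵀ) := Real.sq_sqrt (trp_one_nonneg _)
  have ha₂sq : a₂ ^ 2 = trp 1 (A₂ * A₂ᵀ) := Real.sq_sqrt (trp_one_nonneg _)
  set s : ℝ := a₁ + a₂ + 2 * δ with hsdef
  have hs : 0 < s := by positivity
  set c₁ : ℝ := Real.sqrt (s / (a₁ + δ)) with hc₁def
  set c₂ : ℝ := Real.sqrt (s / (a₂ + δ)) with hc₂def
  have hc₁pos : 0 < c₁ := Real.sqrt_pos.2 (by positivity)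
  have hc₂pos : 0 < c₂ := Real.sqrt_pos.2 (by positivity)
  have hc₁sq : c₁ ^ 2 = s / (a₁ + δ) := Real.sq_sqrt (by positivity)
  have hc₂sq : c₂ ^ 2 = s / (a₂ + δ) := Real.sq_sqrt (by positivity)
  have e₁ : c₁ ^ 2 * (a₁ + δ) = s := by rw [hc₁sq]; field_simp
  have e₂ : c₂ ^ 2 * (a₂ + δ) = s := by rw [hc₂sq]; field_simp
  set A : Matrix (ι₁ ⊕ ι₂) (ι₁ ⊕ ι₂) ℝ :=
    Matrix.fromBlocks (c₁ • A₁) 0 0 (c₂ • A₂) with hAdef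
  have hAA : A * Aᵀ =
      Matrix.fromBlocks (c₁ ^ 2 • (A₁ * A₁ᵀ)) 0 0 (c₂ ^ 2 • (A₂ * A₂ᵀ)) := by
    rw [hAdef, Matrix.fromBlocks_transpose, Matrix.fromBlocks_multiply]
    simp [Matrix.transpose_smul, Matrix.smul_mul, Matrix.mul_smul, smul_smul, pow_two]
  have htrp : trp 1 (A * Aᵀ) = c₁ ^ 2 * trp 1 (A₁ * A₁ᵀ) + c₂ ^ 2 * trp 1 (A₂ * A₂ᵀ) := by
    rw [hAA, trp_one, trp_one, trp_one, Fintype.sum_sum_type]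
    congr 1
    · rw [Finset.mul_sum]
      refine Finset.sum_congr rfl fun i _ => ?_
      show |(c₁ ^ 2 • (A₁ * A₁ᵀ)) i i| = _
      rw [Matrix.smul_apply, smul_eq_mul, abs_mul, abs_of_nonneg (sq_nonneg c₁)]
    · rw [Finset.mul_sum]
      refine Finset.sum_congr rfl fun i _ => ?_
      show |(c₂ ^ 2 • (A₂ * A₂ᵀ)) i i| = _
      rw [Matrix.smul_apply, smul_eq_mul, abs_mul, abs_of_nonneg (sq_nonneg c₂)]
  refine ⟨_, ⟨A, rfl, Sum.elim v₁ v₂, ?_⟩, ?_⟩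
  · rintro _ ⟨z, ⟨hz₁, hz₂⟩, rfl⟩
    obtain ⟨u₁, hu₁ball, hu₁⟩ := hA₁ ⟨_, hz₁, rfl⟩
    obtain ⟨u₂, hu₂ball, hu₂⟩ := hA₂ ⟨_, hz₂, rfl⟩
    refine ⟨Sum.elim (c₁⁻¹ • u₁) (c₂⁻¹ • u₂), ?_, ?_⟩
    · show ∑ k, (Sum.elim (c₁⁻¹ • u₁) (c₂⁻¹ • u₂) k) ^ 2 ≤ 1
      rw [Fintype.sum_sum_type]
      have hb₁ : ∑ i, ((c₁⁻¹ • u₁) i) ^ 2 ≤ c₁⁻¹ ^ 2 := by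
        have : ∑ i, ((c₁⁻¹ • u₁) i) ^ 2 = c₁⁻¹ ^ 2 * ∑ i, (u₁ i) ^ 2 := by
          simp [Finset.mul_sum, mul_pow]
        rw [this]
        have := hu₁ball
        have h1 : ∑ i, (u₁ i) ^ 2 ≤ 1 := this
        nlinarith [sq_nonneg c₁⁻¹]
      have hb₂ : ∑ i, ((c₂⁻¹ • u₂) i) ^ 2 ≤ c₂⁻¹ ^ 2 := by
        have : ∑ i, ((c₂⁻¹ • u₂) i) ^ 2 = c₂⁻¹ ^ 2 * ∑ i, (u₂ i) ^ 2 := by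
          simp [Finset.mul_sum, mul_pow]
        rw [this]
        have h1 : ∑ i, (u₂ i) ^ 2 ≤ 1 := hu₂ball
        nlinarith [sq_nonneg c₂⁻¹]
      have hcsum : c₁⁻¹ ^ 2 + c₂⁻¹ ^ 2 = 1 := by
        have i₁ : c₁⁻¹ ^ 2 = (a₁ + δ) / s := by rw [inv_pow, hc₁sq, inv_div]
        have i₂ : c₂⁻¹ ^ 2 = (a₂ + δ) / s := by rw [inv_pow, hc₂sq, inv_div]
        rw [i₁, i₂, ← add_div, hsdef]
        field_simp
        ring
      simp only [Sum.elim_inl, Sum.elim_inr]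
      linarith
    · show A.mulVec (Sum.elim (c₁⁻¹ • u₁) (c₂⁻¹ • u₂)) = z + Sum.elim v₁ v₂
      rw [hAdef, Matrix.fromBlocks_mulVec]
      have m₁ : (c₁ • A₁).mulVec (c₁⁻¹ • u₁) = A₁.mulVec u₁ := by
        rw [Matrix.smul_mulVec, Matrix.mulVec_smul, smul_smul,
          mul_inv_cancel₀ hc₁pos.ne', one_smul]
      have m₂ : (c₂ • A₂).mulVec (c₂⁻¹ • u₂) = A₂.mulVec u₂ := by
        rw [Matrix.smul_mulVec, Matrix.mulVec_smul, smul_smul,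
          mul_inv_cancel₀ hc₂pos.ne', one_smul]
      funext k
      cases k with
      | inl i =>
        simp only [Sum.elim_inl, Matrix.zero_mulVec, add_zero, Sum.elim_comp_inl]
        rw [m₁]
        simpa using congrFun hu₁ i
      | inr j =>
        simp only [Sum.elim_inr, Matrix.zero_mulVec, zero_add, Sum.elim_comp_inr]
        rw [m₂]
        simpa using congrFun hu₂ j
  · have hb : trp 1 (A * Aᵀ) ≤ s ^ 2 := by
      rw [htrp, ← ha₁sq, ← ha₂sq]
      nlinarith [mul_nonneg (mul_nonneg (sq_nonneg c₁) hδ.le) ha₁,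
        mul_nonneg (mul_nonneg (sq_nonneg c₂) hδ.le) ha₂,
        mul_nonneg ha₁ ha₂, hδ.le]
    calc Real.sqrt (trp 1 (A * Aᵀ)) ≤ Real.sqrt (s ^ 2) := Real.sqrt_le_sqrt hb
      _ = s := by rw [Real.sqrt_sq hs.le]
      _ = a₁ + a₂ + 2 * δ := rfl

end Upper


section Cheb

open RealInnerProductSpace

variable {E : Type*} [NormedAddCommGroup E] [InnerProductSpace ℝ E] [FiniteDimensional ℝ E]

noncomputable def radF (S : Set E) (c : E) : ℝ := sSup ((fun a => ‖a - c‖) '' S)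

variable {S : Set E}

lemma radF_bddAbove (hSb : ∃ R, ∀ a ∈ S, ‖a‖ ≤ R) (c : E) :
    BddAbove ((fun a => ‖a - c‖) '' S) := by
  obtain ⟨R, hR⟩ := hSb
  refine ⟨R + ‖c‖, ?_⟩
  rintro _ ⟨a, ha, rfl⟩
  calc ‖a - c‖ ≤ ‖a‖ + ‖c‖ := norm_sub_le _ _
    _ ≤ R + ‖c‖ := by linarith [hR a ha]

lemma le_radF (hSb : ∃ R, ∀ a ∈ S, ‖a‖ ≤ R) {a : E} (ha : a ∈ S) (c : E) :
    ‖a - c‖ ≤ radF S c :=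
  le_csSup (radF_bddAbove hSb c) ⟨a, ha, rfl⟩

lemma radF_nonneg (hS : S.Nonempty) (hSb : ∃ R, ∀ a ∈ S, ‖a‖ ≤ R) (c : E) :
    0 ≤ radF S c := by
  obtain ⟨a, ha⟩ := hS
  exact (norm_nonneg _).trans (le_radF hSb ha c)

lemma radF_le (hS : S.Nonempty) {c : E} {m : ℝ} (h : ∀ a ∈ S, ‖a - c‖ ≤ m) :
    radF S c ≤ m :=
  csSup_le (hS.image _) (by rintro _ ⟨a, ha, rfl⟩; exact h a ha)

lemma radF_exists_min (hS : S.Nonempty) (hSb : ∃ R, ∀ a ∈ S, ‖a‖ ≤ R) :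
    ∃ c : E, ∀ c', radF S c ≤ radF S c' := by
  obtain ⟨a₀, ha₀⟩ := id hS
  have hlip : LipschitzWith 1 (radF S) := by
    apply LipschitzWith.of_dist_le_mul
    intro c c'
    have key : ∀ u v : E, radF S u ≤ radF S v + dist u v := by
      intro u v
      refine radF_le hS fun a ha => ?_
      calc ‖a - u‖ ≤ ‖a - v‖ + ‖v - u‖ := by
            simpa using norm_add_le (a - v) (v - u)
        _ ≤ radF S v + dist u v := by
            rw [dist_comm, dist_eq_norm]
            exact add_le_add (le_radF hSb ha v) le_rfl
    have k1 := key c c'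
    have k2 := key c' c
    rw [dist_comm] at k2
    rw [NNReal.coe_one, one_mul, Real.dist_eq, abs_sub_le_iff]
    exact ⟨by linarith, by linarith⟩
  set M : ℝ := radF S 0 + ‖a₀‖ + 1 with hM
  have hM0 : (0:E) ∈ Metric.closedBall (0:E) M := by
    have := radF_nonneg ⟨a₀, ha₀⟩ hSb 0
    simp only [Metric.mem_closedBall, dist_self]
    positivity
  obtain ⟨cs, hcsmem, hcsmin⟩ := (isCompact_closedBall (0:E) M).exists_isMinOn
    ⟨0, hM0⟩ hlip.continuous.continuousOn
  refine ⟨cs, fun c' => ?_⟩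
  by_cases hc' : c' ∈ Metric.closedBall (0:E) M
  · exact hcsmin hc'
  · have h1 : M < ‖c'‖ := by
      simpa [dist_eq_norm] using hc'
    have h2 : radF S cs ≤ radF S 0 := hcsmin hM0
    have h3 : ‖c'‖ - ‖a₀‖ ≤ radF S c' := by
      calc ‖c'‖ - ‖a₀‖ ≤ ‖c' - a₀‖ := norm_sub_norm_le c' a₀
        _ = ‖a₀ - c'‖ := norm_sub_rev _ _
        _ ≤ radF S c' := le_radF hSb ha₀ c'
    linarith

lemma exists_combo (hS : S.Nonempty) (hSb : ∃ R, ∀ a ∈ S, ‖a‖ ≤ R)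
    {cs : E} (hmin : ∀ c', radF S cs ≤ radF S c') {ε : ℝ} (hε : 0 < ε) :
    ∃ (ι : Type) (t : Finset ι) (w : ι → ℝ) (zf : ι → E),
      (∀ i ∈ t, 0 ≤ w i) ∧ (∑ i ∈ t, w i) = 1 ∧
      (∀ i ∈ t, zf i ∈ S ∧ radF S cs - ε ≤ ‖zf i - cs‖) ∧
      ‖(∑ i ∈ t, w i • zf i) - cs‖ ≤ ε := by
  classical
  obtain ⟨r, hrdef⟩ : ∃ r : ℝ, r = radF S cs := ⟨_, rfl⟩
  rw [← hrdef] at hmin ⊢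
  set Sfar : Set E := {a | a ∈ S ∧ r - ε ≤ ‖a - cs‖} with hSfardef
  have hSfar_ne : Sfar.Nonempty := by
    obtain ⟨_, ⟨a, ha, rfl⟩, hy⟩ :=
      exists_lt_of_lt_csSup (hS.image fun a => ‖a - cs‖) (show r - ε < radF S cs by rw [← hrdef]; linarith)
    exact ⟨a, ha, hy.le⟩
  have hub : ∀ a ∈ S, ‖a - cs‖ ≤ r := by
    intro a ha; rw [hrdef]; exact le_radF hSb ha cs
  have hc : cs ∈ closure (convexHull ℝ Sfar) := by
    by_contra hc
    obtain ⟨φ, u, hφu, hsep⟩ := geometric_hahn_banach_point_closed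
      ((convex_convexHull ℝ Sfar).closure) isClosed_closure hc
    obtain ⟨y, hydef⟩ : ∃ y : E, y = (InnerProductSpace.toDual ℝ E).symm φ := ⟨_, rfl⟩
    have hy : ∀ x : E, ⟪y, x⟫ = φ x := by
      intro x; rw [hydef]; exact InnerProductSpace.toDual_symm_apply
    obtain ⟨g, hgdef⟩ : ∃ g : ℝ, g = u - φ cs := ⟨_, rfl⟩
    have hg : 0 < g := by rw [hgdef]; linarith
    have hfar : ∀ a ∈ Sfar, g ≤ ⟪y, a - cs⟫ := by
      intro a ha
      have h1 : u < φ a := hsep a (subset_closure (subset_convexHull ℝ _ ha))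
      rw [inner_sub_right, hy, hy, hgdef]
      linarith
    have hr : 0 < r := by
      rcases lt_or_ge 0 r with h | h
      · exact h
      · exfalso
        obtain ⟨a, haS, -⟩ := hSfar_ne
        have h1 : ‖a - cs‖ ≤ r := hub a haS
        have h2 : a = cs := by
          have : ‖a - cs‖ = 0 := le_antisymm (h1.trans h) (norm_nonneg _)
          rwa [norm_sub_eq_zero_iff] at this
        exact hc (subset_closure (subset_convexHull ℝ Sfar
          ⟨h2 ▸ haS, by simp only [sub_self, norm_zero]; linarith⟩))
    have hyne : y ≠ 0 := by
      intro h0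
      obtain ⟨a, ha⟩ := hSfar_ne
      have := hfar a ha
      rw [h0, inner_zero_left] at this
      linarith
    obtain ⟨ny, hnydef⟩ : ∃ ny : ℝ, ny = ‖y‖ := ⟨_, rfl⟩
    have hny : 0 < ny := hnydef ▸ norm_pos_iff.2 hyne
    obtain ⟨g', hg'def⟩ : ∃ g' : ℝ, g' = g / ny := ⟨_, rfl⟩
    have hg' : 0 < g' := by rw [hg'def]; positivity
    obtain ⟨δ, hδdef⟩ : ∃ δ : ℝ, δ = min (min (ε/2) (r/2)) g' := ⟨_, rfl⟩
    have hδpos : 0 < δ := by rw [hδdef]; exact lt_min (lt_min (by linarith) (by linarith)) hg'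
    have hδ₁ : δ ≤ ε/2 := by rw [hδdef]; exact (min_le_left _ _).trans (min_le_left _ _)
    have hδ₂ : δ ≤ r/2 := by rw [hδdef]; exact (min_le_left _ _).trans (min_le_right _ _)
    have hδ₃ : δ ≤ g' := by rw [hδdef]; exact min_le_right _ _
    obtain ⟨yy, hyydef⟩ : ∃ yy : E, yy = δ • (ny⁻¹ • y) := ⟨_, rfl⟩
    have hyynorm : ‖yy‖ = δ := by
      rw [hyydef, norm_smul, norm_smul, norm_inv, Real.norm_eq_abs, Real.norm_eq_abs,
        abs_of_pos hδpos, abs_of_pos (hnydef ▸ hny), ← hnydef]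
      field_simp
    obtain ⟨c', hc'def⟩ : ∃ c' : E, c' = cs + yy := ⟨_, rfl⟩
    have hkey : ∀ a : E, ‖a - c'‖ ^ 2 = ‖a - cs‖ ^ 2 - 2 * (δ * ny⁻¹ * ⟪y, a - cs⟫) + δ ^ 2 := by
      intro a
      have h1 : a - c' = (a - cs) - yy := by rw [hc'def]; abel
      rw [h1, norm_sub_sq_real, hyynorm]
      congr 2
      rw [hyydef, real_inner_smul_right, real_inner_smul_right, real_inner_comm, hnydef]
      ring
    obtain ⟨tt, httdef⟩ : ∃ tt : ℝ, tt = δ^2 / (2*r) := ⟨_, rfl⟩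
    have htt : 0 < tt := by rw [httdef]; positivity
    have httr : tt ≤ r / 2 := by
      rw [httdef, div_le_iff₀ (by linarith)]
      nlinarith
    have hrt : 2 * r * tt = δ^2 := by rw [httdef]; field_simp
    obtain ⟨b, hbdef⟩ : ∃ b : ℝ, b = r - min tt (ε/2) := ⟨_, rfl⟩
    have hbr : b < r := by
      have : 0 < min tt (ε/2) := lt_min htt (by linarith)
      rw [hbdef]; linarith
    have hble : r ≤ b := by
      refine (hmin c').trans (radF_le hS fun a ha => ?_)
      by_cases hfa : r - ε ≤ ‖a - cs‖
      · have h1 : g ≤ ⟪y, a - cs⟫ := hfar a ⟨ha, hfa⟩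
        have h2 : ‖a - cs‖ ≤ r := hub a ha
        have h3 : δ * g' ≤ δ * ny⁻¹ * ⟪y, a - cs⟫ := by
          rw [hg'def, div_eq_mul_inv]
          calc δ * (g * ny⁻¹) = δ * ny⁻¹ * g := by ring
            _ ≤ δ * ny⁻¹ * ⟪y, a - cs⟫ := by
                apply mul_le_mul_of_nonneg_left h1
                have : 0 < ny⁻¹ := by positivity
                positivity
        have h4 : ‖a - c'‖ ^ 2 ≤ r^2 - δ^2 := by
          rw [hkey a]
          nlinarith [mul_le_mul h2 h2 (norm_nonneg (a - cs)) (by linarith : (0:ℝ) ≤ r),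
            mul_le_mul_of_nonneg_left hδ₃ hδpos.le]
        have h5 : ‖a - c'‖^2 ≤ (r - tt)^2 := by nlinarith [sq_nonneg tt]
        have h6 : ‖a - c'‖ ≤ r - tt := by
          nlinarith [norm_nonneg (a - c')]
        have h7 := min_le_left tt (ε/2)
        rw [hbdef]
        linarith
      · push_neg at hfa
        have h1 : ‖a - c'‖ ≤ ‖a - cs‖ + δ := by
          have e : a - c' = (a - cs) - yy := by rw [hc'def]; abel
          calc ‖a - c'‖ = ‖(a - cs) - yy‖ := by rw [e]
            _ ≤ ‖a - cs‖ + ‖yy‖ := norm_sub_le _ _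
            _ = ‖a - cs‖ + δ := by rw [hyynorm]
        have h7 := min_le_right tt (ε/2)
        rw [hbdef]
        linarith
    linarith
  obtain ⟨z, hz, hdist⟩ := Metric.mem_closure_iff.1 hc ε hε
  rw [convexHull_eq] at hz
  obtain ⟨ι', t, w, zf, hw0, hw1, hmem, hcm⟩ := hz
  refine ⟨ι', t, w, zf, hw0, hw1, fun i hi => hmem i hi, ?_⟩
  rw [← Finset.centerMass_eq_of_sum_1 t zf hw1, hcm]
  rw [← dist_eq_norm, dist_comm]
  exact hdist.le

end Cheb

section Cheb2

open RealInnerProductSpace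

variable {E : Type*} [NormedAddCommGroup E] [InnerProductSpace ℝ E] [FiniteDimensional ℝ E]

lemma variance_identity {ι : Type} (t : Finset ι) (w : ι → ℝ) (za : ι → E)
    (hw1 : ∑ i ∈ t, w i = 1) :
    ∑ i ∈ t, w i * ‖za i - (∑ i' ∈ t, w i' • za i')‖^2
      = ∑ i ∈ t, w i * ‖za i‖^2 - ‖∑ i' ∈ t, w i' • za i'‖^2 := by
  obtain ⟨m, hmdef⟩ : ∃ m : E, m = ∑ i' ∈ t, w i' • za i' := ⟨_, rfl⟩
  rw [← hmdef]
  have hinner : ∑ i ∈ t, w i * ⟪za i, m⟫ = ‖m‖^2 := by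
    have : ∑ i ∈ t, w i * ⟪za i, m⟫ = ⟪m, m⟫ := by
      rw [hmdef, sum_inner]
      exact Finset.sum_congr rfl fun i _ => (real_inner_smul_left _ _ _).symm
    rw [this, real_inner_self_eq_norm_sq]
  calc ∑ i ∈ t, w i * ‖za i - m‖^2
      = ∑ i ∈ t, w i * (‖za i‖^2 - 2 * ⟪za i, m⟫ + ‖m‖^2) := by
        exact Finset.sum_congr rfl fun i _ => by rw [norm_sub_sq_real]
    _ = ∑ i ∈ t, (w i * ‖za i‖^2 - w i * (2 * ⟪za i, m⟫) + w i * ‖m‖^2) :=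
        Finset.sum_congr rfl fun i _ => by ring
    _ = ∑ i ∈ t, w i * ‖za i‖^2 - ∑ i ∈ t, w i * (2 * ⟪za i, m⟫)
        + ∑ i ∈ t, w i * ‖m‖^2 := by
        rw [Finset.sum_add_distrib, Finset.sum_sub_distrib]
    _ = ∑ i ∈ t, w i * ‖za i‖^2 - ‖m‖^2 := by
        have e1 : ∑ i ∈ t, w i * (2 * ⟪za i, m⟫) = 2 * ∑ i ∈ t, w i * ⟪za i, m⟫ := by
          rw [Finset.mul_sum]
          exact Finset.sum_congr rfl fun i _ => by ring
        have e2 : ∑ i ∈ t, w i * ‖m‖^2 = ‖m‖^2 := by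
          rw [← Finset.sum_mul, hw1, one_mul]
        rw [e1, e2, hinner]
        ring

lemma variance_pair {ι κ : Type} (t : Finset ι) (u : Finset κ) (w : ι → ℝ) (ω : κ → ℝ)
    (za : ι → E) (zb : κ → E)
    (hw0 : ∀ i ∈ t, 0 ≤ w i) (hw1 : ∑ i ∈ t, w i = 1)
    (hω0 : ∀ j ∈ u, 0 ≤ ω j) (hω1 : ∑ j ∈ u, ω j = 1)
    (hab : ∀ i ∈ t, ∀ j ∈ u, ‖za i + zb j‖ ≤ 1) :
    ∑ i ∈ t, w i * ‖za i - (∑ i' ∈ t, w i' • za i')‖^2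
      + ∑ j ∈ u, ω j * ‖zb j - (∑ j' ∈ u, ω j' • zb j')‖^2 ≤ 1 := by
  obtain ⟨ma, hmadef⟩ : ∃ m : E, m = ∑ i' ∈ t, w i' • za i' := ⟨_, rfl⟩
  obtain ⟨mb, hmbdef⟩ : ∃ m : E, m = ∑ j' ∈ u, ω j' • zb j' := ⟨_, rfl⟩
  rw [variance_identity t w za hw1, variance_identity u ω zb hω1, ← hmadef, ← hmbdef]
  have hdouble : ∑ i ∈ t, ∑ j ∈ u, w i * ω j * ‖za i + zb j‖^2 ≤ 1 := by
    calc ∑ i ∈ t, ∑ j ∈ u, w i * ω j * ‖za i + zb j‖^2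
        ≤ ∑ i ∈ t, ∑ j ∈ u, w i * ω j := by
          refine Finset.sum_le_sum fun i hi => Finset.sum_le_sum fun j hj => ?_
          have h1 : ‖za i + zb j‖^2 ≤ 1 := by
            have := hab i hi j hj
            nlinarith [norm_nonneg (za i + zb j)]
          nlinarith [mul_nonneg (hw0 i hi) (hω0 j hj)]
      _ = 1 := by
          rw [← Finset.sum_mul_sum]
          rw [hw1, hω1, one_mul]
  have hexp : ∑ i ∈ t, ∑ j ∈ u, w i * ω j * ‖za i + zb j‖^2
      = ∑ i ∈ t, w i * ‖za i‖^2 + 2 * ⟪ma, mb⟫ + ∑ j ∈ u, ω j * ‖zb j‖^2 := by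
    have hperterm : ∀ i ∈ t, ∑ j ∈ u, w i * ω j * ‖za i + zb j‖^2
        = w i * ‖za i‖^2 + 2 * (w i * ⟪za i, mb⟫) + w i * ∑ j ∈ u, ω j * ‖zb j‖^2 := by
      intro i hi
      have : ∀ j ∈ u, w i * ω j * ‖za i + zb j‖^2
          = w i * ω j * ‖za i‖^2 + 2 * (w i * (ω j * ⟪za i, zb j⟫)) + w i * (ω j * ‖zb j‖^2) := by
        intro j hj
        rw [norm_add_sq_real]
        ring
      rw [Finset.sum_congr rfl this, Finset.sum_add_distrib, Finset.sum_add_distrib]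
      congr 1
      · congr 1
        · rw [← Finset.sum_mul]
          rw [show ∑ j ∈ u, w i * ω j = w i * ∑ j ∈ u, ω j from (Finset.mul_sum _ _ _).symm]
          rw [hω1]; ring
        · rw [← Finset.mul_sum, ← Finset.mul_sum]
          congr 2
          rw [hmbdef, inner_sum]
          exact Finset.sum_congr rfl fun j _ => (real_inner_smul_right _ _ _).symm
      · rw [← Finset.mul_sum]
    rw [Finset.sum_congr rfl hperterm, Finset.sum_add_distrib, Finset.sum_add_distrib]
    congr 1
    · congr 1
      rw [← Finset.mul_sum]
      have : ∑ i ∈ t, w i * ⟪za i, mb⟫ = ⟪ma, mb⟫ := by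
        rw [hmadef, sum_inner]
        exact Finset.sum_congr rfl fun i _ => (real_inner_smul_left _ _ _).symm
      rw [this]
    · rw [← Finset.sum_mul, hw1, one_mul]
  have hmab : 0 ≤ ‖ma + mb‖^2 := sq_nonneg _
  have hexpand : ‖ma + mb‖^2 = ‖ma‖^2 + 2*⟪ma,mb⟫ + ‖mb‖^2 := norm_add_sq_real _ _
  linarith [hexp ▸ hdouble]

lemma cheb_main (S T : Set E) (hS : S.Nonempty) (hT : T.Nonempty)
    (h : ∀ a ∈ S, ∀ b ∈ T, ‖a + b‖ ≤ 1) (V W : Submodule ℝ E)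
    (hSV : S ⊆ (V : Set E)) (hTW : T ⊆ (W : Set E)) :
    ∃ c ∈ V, ∃ d ∈ W, ∃ ρ₁ ρ₂ : ℝ, 0 ≤ ρ₁ ∧ 0 ≤ ρ₂ ∧ ρ₁^2 + ρ₂^2 ≤ 1 ∧
      (∀ a ∈ S, ‖a - c‖ ≤ ρ₁) ∧ (∀ b ∈ T, ‖b - d‖ ≤ ρ₂) := by
  obtain ⟨a₀, ha₀⟩ := hS
  obtain ⟨b₀, hb₀⟩ := hT
  have hSb : ∃ R, ∀ a ∈ S, ‖a‖ ≤ R := by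
    refine ⟨1 + ‖b₀‖, fun a ha => ?_⟩
    have h1 := h a ha b₀ hb₀
    have h2 : ‖a‖ ≤ ‖a + b₀‖ + ‖b₀‖ := by
      calc ‖a‖ = ‖(a + b₀) - b₀‖ := by congr 1; abel
        _ ≤ ‖a + b₀‖ + ‖b₀‖ := norm_sub_le _ _
    linarith
  have hTb : ∃ R, ∀ b ∈ T, ‖b‖ ≤ R := by
    refine ⟨1 + ‖a₀‖, fun b hb => ?_⟩
    have h1 := h a₀ ha₀ b hb
    have h2 : ‖b‖ ≤ ‖a₀ + b‖ + ‖a₀‖ := by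
      calc ‖b‖ = ‖(a₀ + b) - a₀‖ := by congr 1; abel
        _ ≤ ‖a₀ + b‖ + ‖a₀‖ := norm_sub_le _ _
    linarith
  obtain ⟨cs, hcsmin⟩ := radF_exists_min ⟨a₀, ha₀⟩ hSb
  obtain ⟨ds, hdsmin⟩ := radF_exists_min ⟨b₀, hb₀⟩ hTb
  obtain ⟨rS, hrSdef⟩ : ∃ r : ℝ, r = radF S cs := ⟨_, rfl⟩
  obtain ⟨rT, hrTdef⟩ : ∃ r : ℝ, r = radF T ds := ⟨_, rfl⟩
  have hrS0 : 0 ≤ rS := hrSdef ▸ radF_nonneg ⟨a₀, ha₀⟩ hSb cs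
  have hrT0 : 0 ≤ rT := hrTdef ▸ radF_nonneg ⟨b₀, hb₀⟩ hTb ds
  -- upper bounds on the radii
  obtain ⟨RS, hRS⟩ := id hSb
  obtain ⟨RT, hRT⟩ := id hTb
  have hRS0 : 0 ≤ RS := (norm_nonneg a₀).trans (hRS a₀ ha₀)
  have hRT0 : 0 ≤ RT := (norm_nonneg b₀).trans (hRT b₀ hb₀)
  have hrSb : rS ≤ RS := by
    rw [hrSdef]
    refine (hcsmin 0).trans (radF_le ⟨a₀, ha₀⟩ fun a ha => ?_)
    simpa using hRS a ha
  have hrTb : rT ≤ RT := by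
    rw [hrTdef]
    refine (hdsmin 0).trans (radF_le ⟨b₀, hb₀⟩ fun b hb => ?_)
    simpa using hRT b hb
  -- the key inequality rS^2 + rT^2 ≤ 1
  have hkey : rS^2 + rT^2 ≤ 1 := by
    refine le_of_forall_pos_le_add fun ε hε => ?_
    obtain ⟨ε', hε'def⟩ : ∃ e : ℝ, e = min (ε / (4 * (RS + RT) + 1)) 1 := ⟨_, rfl⟩
    have hε'pos : 0 < ε' := by
      rw [hε'def]; exact lt_min (by positivity) one_pos
    obtain ⟨ι₁, t, w, za, hw0, hw1, hzaS, hzacm⟩ :=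
      exists_combo ⟨a₀, ha₀⟩ hSb hcsmin hε'pos
    obtain ⟨ι₂, uu, ω, zb, hω0, hω1, hzbT, hzbcm⟩ :=
      exists_combo ⟨b₀, hb₀⟩ hTb hdsmin hε'pos
    have hvar := variance_pair t uu w ω za zb hw0 hw1 hω0 hω1
      (fun i hi j hj => h (za i) (hzaS i hi).1 (zb j) (hzbT j hj).1)
    -- lower bound the variances
    obtain ⟨ma, hmadef⟩ : ∃ m : E, m = ∑ i' ∈ t, w i' • za i' := ⟨_, rfl⟩
    obtain ⟨mb, hmbdef⟩ : ∃ m : E, m = ∑ j' ∈ uu, ω j' • zb j' := ⟨_, rfl⟩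
    rw [← hmadef, ← hmbdef] at hvar
    have hvarS : (max 0 (rS - 2*ε'))^2 ≤ ∑ i ∈ t, w i * ‖za i - ma‖^2 := by
      have hterm : ∀ i ∈ t, (max 0 (rS - 2*ε'))^2 ≤ ‖za i - ma‖^2 := by
        intro i hi
        have h1 : rS - ε' ≤ ‖za i - cs‖ := hrSdef ▸ (hzaS i hi).2
        have h2 : ‖ma - cs‖ ≤ ε' := hmadef ▸ hzacm
        have h3 : rS - 2*ε' ≤ ‖za i - ma‖ := by
          have h4 : ‖za i - cs‖ ≤ ‖za i - ma‖ + ‖ma - cs‖ := by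
            have e : za i - cs = (za i - ma) + (ma - cs) := by abel
            rw [e]; exact norm_add_le _ _
          linarith
        have h5 : max 0 (rS - 2*ε') ≤ ‖za i - ma‖ :=
          max_le (norm_nonneg _) h3
        exact pow_le_pow_left₀ (le_max_left _ _) h5 2
      calc (max 0 (rS - 2*ε'))^2 = ∑ i ∈ t, w i * (max 0 (rS - 2*ε'))^2 := by
            rw [← Finset.sum_mul, hw1, one_mul]
        _ ≤ ∑ i ∈ t, w i * ‖za i - ma‖^2 :=
            Finset.sum_le_sum fun i hi => mul_le_mul_of_nonneg_left (hterm i hi) (hw0 i hi)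
    have hvarT : (max 0 (rT - 2*ε'))^2 ≤ ∑ j ∈ uu, ω j * ‖zb j - mb‖^2 := by
      have hterm : ∀ j ∈ uu, (max 0 (rT - 2*ε'))^2 ≤ ‖zb j - mb‖^2 := by
        intro j hj
        have h1 : rT - ε' ≤ ‖zb j - ds‖ := hrTdef ▸ (hzbT j hj).2
        have h2 : ‖mb - ds‖ ≤ ε' := hmbdef ▸ hzbcm
        have h3 : rT - 2*ε' ≤ ‖zb j - mb‖ := by
          have h4 : ‖zb j - ds‖ ≤ ‖zb j - mb‖ + ‖mb - ds‖ := by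
            have e : zb j - ds = (zb j - mb) + (mb - ds) := by abel
            rw [e]; exact norm_add_le _ _
          linarith
        exact pow_le_pow_left₀ (le_max_left _ _) (max_le (norm_nonneg _) h3) 2
      calc (max 0 (rT - 2*ε'))^2 = ∑ j ∈ uu, ω j * (max 0 (rT - 2*ε'))^2 := by
            rw [← Finset.sum_mul, hω1, one_mul]
        _ ≤ ∑ j ∈ uu, ω j * ‖zb j - mb‖^2 :=
            Finset.sum_le_sum fun j hj => mul_le_mul_of_nonneg_left (hterm j hj) (hω0 j hj)
    have hS2 : rS^2 ≤ (max 0 (rS - 2*ε'))^2 + 4*ε'*rS := by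
      rcases le_or_gt (rS - 2*ε') 0 with h0 | h0
      · rw [max_eq_left h0]
        nlinarith
      · rw [max_eq_right h0.le]
        nlinarith [hε'pos.le]
    have hT2 : rT^2 ≤ (max 0 (rT - 2*ε'))^2 + 4*ε'*rT := by
      rcases le_or_gt (rT - 2*ε') 0 with h0 | h0
      · rw [max_eq_left h0]
        nlinarith
      · rw [max_eq_right h0.le]
        nlinarith [hε'pos.le]
    have hεfinal : 4*ε'*rS + 4*ε'*rT ≤ ε := by
      have h1 : ε' ≤ ε / (4 * (RS + RT) + 1) := by rw [hε'def]; exact min_le_left _ _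
      have h2 : 4*ε'*rS + 4*ε'*rT ≤ 4*ε'*(RS + RT) := by nlinarith [hε'pos.le]
      have h3 : 4*ε'*(RS+RT) ≤ ε := by
        have h4 : ε' * (4 * (RS + RT) + 1) ≤ ε := by
          rw [← le_div_iff₀ (by positivity)]
          exact h1
        nlinarith [hε'pos.le]
      linarith
    linarith
  -- project the centers onto V and W
  have hproj : ∀ (V : Submodule ℝ E) (c : E), ∃ c' ∈ V, ∀ a ∈ (V : Set E), ‖a - c'‖ ≤ ‖a - c‖ := by
    intro V c
    haveI : CompleteSpace V := FiniteDimensional.complete ℝ V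
    refine ⟨(V.orthogonalProjectionOnto c : E), (V.orthogonalProjectionOnto c).2, fun a ha => ?_⟩
    have horth : ⟪a - (V.orthogonalProjectionOnto c : E), c - (V.orthogonalProjectionOnto c : E)⟫ = 0 :=
      Submodule.inner_right_of_mem_orthogonal
        (Submodule.sub_mem V ha (V.orthogonalProjectionOnto c).2)
        (Submodule.sub_starProjection_mem_orthogonal (K := V) c)
    have hpyth : ‖a - c‖^2 = ‖a - (V.orthogonalProjectionOnto c : E)‖^2
        + ‖c - (V.orthogonalProjectionOnto c : E)‖^2 := by
      have e : a - c = (a - (V.orthogonalProjectionOnto c : E))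
          - (c - (V.orthogonalProjectionOnto c : E)) := by abel
      rw [e, norm_sub_sq_real, horth]
      ring
    nlinarith [norm_nonneg (a - c), norm_nonneg (a - (V.orthogonalProjectionOnto c : E)),
      sq_nonneg (‖c - (V.orthogonalProjectionOnto c : E)‖)]
  obtain ⟨c, hcV, hcle⟩ := hproj V cs
  obtain ⟨d, hdW, hdle⟩ := hproj W ds
  refine ⟨c, hcV, d, hdW, rS, rT, hrS0, hrT0, hkey, fun a ha => ?_, fun b hb => ?_⟩
  · exact (hcle a (hSV ha)).trans (hrSdef ▸ le_radF hSb ha cs)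
  · exact (hdle b (hTW hb)).trans (hrTdef ▸ le_radF hTb hb ds)

end Cheb2

section MatrixHelpers

variable {ι : Type*} [Fintype ι] [DecidableEq ι]

lemma dot_self_eq_sum_sq (x : ι → ℝ) : x ⬝ᵥ x = ∑ i, x i ^ 2 := by
  simp [dotProduct, pow_two]

lemma dot_self_nonneg (x : ι → ℝ) : 0 ≤ x ⬝ᵥ x := by
  rw [dot_self_eq_sum_sq]; positivity

lemma dot_self_eq_zero_iff (x : ι → ℝ) : x ⬝ᵥ x = 0 ↔ x = 0 := by
  rw [dot_self_eq_sum_sq]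
  constructor
  · intro h
    funext i
    have h1 : ∀ j ∈ Finset.univ, (0:ℝ) ≤ x j ^ 2 := fun j _ => sq_nonneg _
    have h2 := (Finset.sum_eq_zero_iff_of_nonneg h1).1 h i (Finset.mem_univ i)
    exact pow_eq_zero_iff (n := 2) (by norm_num) |>.1 h2
  · rintro rfl; simp

lemma sym_dot_comm {M : Matrix ι ι ℝ} (hsym : Mᵀ = M) (p q : ι → ℝ) :
    q ⬝ᵥ M.mulVec p = p ⬝ᵥ M.mulVec q := by
  rw [Matrix.dotProduct_mulVec, ← Matrix.mulVec_transpose, hsym, dotProduct_comm]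

lemma dot_cs {M : Matrix ι ι ℝ} (hsym : Mᵀ = M) (hpos : ∀ x, 0 ≤ x ⬝ᵥ M.mulVec x)
    (p q : ι → ℝ) : (p ⬝ᵥ M.mulVec q)^2 ≤ (p ⬝ᵥ M.mulVec p) * (q ⬝ᵥ M.mulVec q) := by
  have key : ∀ t : ℝ, 0 ≤ (q ⬝ᵥ M.mulVec q) * (t * t) + (2 * (p ⬝ᵥ M.mulVec q)) * t
      + (p ⬝ᵥ M.mulVec p) := by
    intro t
    have h0 := hpos (p + t • q)
    have hexp : (p + t • q) ⬝ᵥ M.mulVec (p + t • q)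
        = (q ⬝ᵥ M.mulVec q) * (t * t) + (2 * (p ⬝ᵥ M.mulVec q)) * t + (p ⬝ᵥ M.mulVec p) := by
      rw [Matrix.mulVec_add, Matrix.mulVec_smul, add_dotProduct,
        smul_dotProduct, dotProduct_add, dotProduct_add,
        dotProduct_smul, dotProduct_smul]
      rw [sym_dot_comm hsym p q]
      simp only [smul_eq_mul]
      ring
    linarith [hexp ▸ h0]
  have := discrim_le_zero key
  rw [discrim] at this
  nlinarith

lemma vec_cs (a u : ι → ℝ) : (a ⬝ᵥ u)^2 ≤ (a ⬝ᵥ a) * (u ⬝ᵥ u) := by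
  have h1 : (1 : Matrix ι ι ℝ)ᵀ = 1 := Matrix.transpose_one
  have h2 : ∀ x : ι → ℝ, 0 ≤ x ⬝ᵥ (1 : Matrix ι ι ℝ).mulVec x := by
    intro x; rw [Matrix.one_mulVec]; exact dot_self_nonneg x
  have := dot_cs h1 h2 a u
  simpa [Matrix.one_mulVec] using this

lemma dot_sq' {κ : Type*} [Fintype κ] (M : Matrix κ ι ℝ) (p q : ι → ℝ) :
    p ⬝ᵥ (Mᵀ * M).mulVec q = (M.mulVec p) ⬝ᵥ (M.mulVec q) := by
  rw [← Matrix.mulVec_mulVec, Matrix.dotProduct_mulVec, Matrix.vecMul_transpose]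

lemma inv_dot_nonneg {Y : Matrix ι ι ℝ} (hdet : IsUnit Y.det)
    (hpos : ∀ x, 0 ≤ x ⬝ᵥ Y.mulVec x) (w : ι → ℝ) :
    0 ≤ w ⬝ᵥ Y⁻¹.mulVec w := by
  have h1 : Y.mulVec (Y⁻¹.mulVec w) = w := by
    rw [Matrix.mulVec_mulVec, Matrix.mul_nonsing_inv Y hdet, Matrix.one_mulVec]
  have h2 := hpos (Y⁻¹.mulVec w)
  rw [h1] at h2
  rwa [dotProduct_comm] at h2

lemma posSemidef_of_real {M : Matrix ι ι ℝ} (hsym : Mᵀ = M)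
    (hpos : ∀ x, 0 ≤ x ⬝ᵥ M.mulVec x) : M.PosSemidef := by
  refine Matrix.PosSemidef.of_dotProduct_mulVec_nonneg ?_ fun x => by simpa using hpos x
  · show Mᴴ = M
    have : Mᴴ = Mᵀ := by
      ext i j; simp [Matrix.conjTranspose_apply, Matrix.transpose_apply]
    rw [this, hsym]

lemma posDef_of_real {M : Matrix ι ι ℝ} (hsym : Mᵀ = M)
    (hpos : ∀ x, x ≠ 0 → 0 < x ⬝ᵥ M.mulVec x) : M.PosDef := by
  refine Matrix.PosDef.of_dotProduct_mulVec_pos ?_ fun x hx => by simpa using hpos x hx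
  · show Mᴴ = M
    have : Mᴴ = Mᵀ := by
      ext i j; simp [Matrix.conjTranspose_apply, Matrix.transpose_apply]
    rw [this, hsym]

lemma herm_transpose {M : Matrix ι ι ℝ} (h : M.IsHermitian) : Mᵀ = M := by
  have h2 : Mᴴ = Mᵀ := by
    ext i j; simp [Matrix.conjTranspose_apply, Matrix.transpose_apply]
  rw [← h2]; exact h

open scoped MatrixOrder in
lemma exists_sqrt {N : Matrix ι ι ℝ} (hsym : Nᵀ = N) (hpos : ∀ x, 0 ≤ x ⬝ᵥ N.mulVec x)
    (hdet : IsUnit N.det) :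
    ∃ B : Matrix ι ι ℝ, Bᵀ = B ∧ B * B = N ∧ IsUnit B.det := by
  have hpsd := posSemidef_of_real hsym hpos
  have hN0 : 0 ≤ N := hpsd.nonneg
  refine ⟨CFC.sqrt N, herm_transpose (Matrix.nonneg_iff_posSemidef.1 (CFC.sqrt_nonneg N)).isHermitian,
    CFC.sqrt_mul_sqrt_self N hN0, ?_⟩
  have hdet2 : (CFC.sqrt N).det * (CFC.sqrt N).det = N.det := by
    rw [← Matrix.det_mul, CFC.sqrt_mul_sqrt_self N hN0]
  rw [isUnit_iff_ne_zero]
  intro h0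
  rw [isUnit_iff_ne_zero] at hdet
  exact hdet (by rw [← hdet2, h0, zero_mul])

lemma diag_nonneg_of_dotpos {M : Matrix ι ι ℝ} (hpos : ∀ x, 0 ≤ x ⬝ᵥ M.mulVec x) (i : ι) :
    0 ≤ M i i := by
  have := hpos (Pi.single i 1)
  simpa [Matrix.mulVec_single, single_dotProduct] using this

lemma single_dot_diag (M : Matrix ι ι ℝ) (i : ι) :
    Pi.single i 1 ⬝ᵥ M.mulVec (Pi.single i 1) = M i i := by
  simp [Matrix.mulVec_single, single_dotProduct]

lemma mulVec_inj {C : Matrix ι ι ℝ} (hdet : IsUnit C.det) {z : ι → ℝ}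
    (h : C.mulVec z = 0) : z = 0 := by
  have h1 : C⁻¹.mulVec (C.mulVec z) = z := by
    rw [Matrix.mulVec_mulVec, Matrix.nonsing_inv_mul C hdet, Matrix.one_mulVec]
  rw [h, Matrix.mulVec_zero] at h1
  exact h1.symm

end MatrixHelpers

section BlockIneq

variable {ι₁ ι₂ : Type*} [Fintype ι₁] [Fintype ι₂] [DecidableEq ι₁] [DecidableEq ι₂]

lemma elim_dot_elim (a c : ι₁ → ℝ) (b d : ι₂ → ℝ) :
    Sum.elim a b ⬝ᵥ Sum.elim c d = a ⬝ᵥ c + b ⬝ᵥ d := by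
  simp [dotProduct, Fintype.sum_sum_type]

lemma block_ineq₁ {X : Matrix (ι₁ ⊕ ι₂) (ι₁ ⊕ ι₂) ℝ} (hXs : Xᵀ = X)
    (hXpos : ∀ z, 0 ≤ z ⬝ᵥ X.mulVec z) (hXdet : IsUnit X.det)
    (hXinvpos : ∀ z, 0 ≤ z ⬝ᵥ X⁻¹.mulVec z)
    {Y : Matrix ι₁ ι₁ ℝ}
    (hY : ∀ p q : ι₁ → ℝ, Sum.elim p 0 ⬝ᵥ X.mulVec (Sum.elim q 0) = p ⬝ᵥ Y.mulVec q)
    (hYdet : IsUnit Y.det)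
    (hYinvpos : ∀ w, 0 ≤ w ⬝ᵥ Y⁻¹.mulVec w)
    (w : ι₁ → ℝ) :
    w ⬝ᵥ Y⁻¹.mulVec w ≤ Sum.elim w 0 ⬝ᵥ X⁻¹.mulVec (Sum.elim w 0) := by
  set p : (ι₁ ⊕ ι₂) → ℝ := Sum.elim (Y⁻¹.mulVec w) 0 with hpdef
  set s : (ι₁ ⊕ ι₂) → ℝ := Sum.elim w 0 with hsdef
  set v : ℝ := w ⬝ᵥ Y⁻¹.mulVec w with hvdef
  have hv0 : 0 ≤ v := hYinvpos w
  have hps : p ⬝ᵥ s = v := by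
    rw [hpdef, hsdef, elim_dot_elim, zero_dotProduct, add_zero, dotProduct_comm]
  have hpXp : p ⬝ᵥ X.mulVec p = v := by
    rw [hpdef, hY]
    rw [Matrix.mulVec_mulVec, Matrix.mul_nonsing_inv Y hYdet, Matrix.one_mulVec]
    rw [dotProduct_comm]
  have hq' : X.mulVec (X⁻¹.mulVec s) = s := by
    rw [Matrix.mulVec_mulVec, Matrix.mul_nonsing_inv X hXdet, Matrix.one_mulVec]
  have hcs := dot_cs hXs hXpos p (X⁻¹.mulVec s)
  rw [hq', hpXp, hps] at hcs
  rw [dotProduct_comm (X⁻¹.mulVec s) s] at hcs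
  rcases eq_or_lt_of_le hv0 with h0 | h0
  · rw [← h0]; exact hXinvpos s
  · nlinarith

lemma block_ineq₂ {X : Matrix (ι₁ ⊕ ι₂) (ι₁ ⊕ ι₂) ℝ} (hXs : Xᵀ = X)
    (hXpos : ∀ z, 0 ≤ z ⬝ᵥ X.mulVec z) (hXdet : IsUnit X.det)
    (hXinvpos : ∀ z, 0 ≤ z ⬝ᵥ X⁻¹.mulVec z)
    {Y : Matrix ι₂ ι₂ ℝ}
    (hY : ∀ p q : ι₂ → ℝ, Sum.elim 0 p ⬝ᵥ X.mulVec (Sum.elim 0 q) = p ⬝ᵥ Y.mulVec q)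
    (hYdet : IsUnit Y.det)
    (hYinvpos : ∀ w, 0 ≤ w ⬝ᵥ Y⁻¹.mulVec w)
    (w : ι₂ → ℝ) :
    w ⬝ᵥ Y⁻¹.mulVec w ≤ Sum.elim 0 w ⬝ᵥ X⁻¹.mulVec (Sum.elim 0 w) := by
  set p : (ι₁ ⊕ ι₂) → ℝ := Sum.elim 0 (Y⁻¹.mulVec w) with hpdef
  set s : (ι₁ ⊕ ι₂) → ℝ := Sum.elim 0 w with hsdef
  set v : ℝ := w ⬝ᵥ Y⁻¹.mulVec w with hvdef
  have hv0 : 0 ≤ v := hYinvpos w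
  have hps : p ⬝ᵥ s = v := by
    rw [hpdef, hsdef, elim_dot_elim, zero_dotProduct, zero_add, dotProduct_comm]
  have hpXp : p ⬝ᵥ X.mulVec p = v := by
    rw [hpdef, hY]
    rw [Matrix.mulVec_mulVec, Matrix.mul_nonsing_inv Y hYdet, Matrix.one_mulVec]
    rw [dotProduct_comm]
  have hq' : X.mulVec (X⁻¹.mulVec s) = s := by
    rw [Matrix.mulVec_mulVec, Matrix.mul_nonsing_inv X hXdet, Matrix.one_mulVec]
  have hcs := dot_cs hXs hXpos p (X⁻¹.mulVec s)
  rw [hq', hpXp, hps] at hcs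
  rw [dotProduct_comm (X⁻¹.mulVec s) s] at hcs
  rcases eq_or_lt_of_le hv0 with h0 | h0
  · rw [← h0]; exact hXinvpos s
  · nlinarith

end BlockIneq

section Lower

noncomputable def toE {ι : Type*} [Fintype ι] : (ι → ℝ) ≃ₗ[ℝ] EuclideanSpace ℝ ι :=
  (WithLp.linearEquiv 2 ℝ (ι → ℝ)).symm

lemma toE_apply {ι : Type*} [Fintype ι] (f : ι → ℝ) (i : ι) : (toE f) i = f i := by
  rw [toE, WithLp.linearEquiv_symm_apply]; rfl

lemma norm_toE_sq {ι : Type*} [Fintype ι] (f : ι → ℝ) : ‖toE f‖^2 = ∑ i, f i ^ 2 := by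
  rw [EuclideanSpace.norm_eq]
  rw [Real.sq_sqrt (by positivity)]
  exact Finset.sum_congr rfl fun i _ => by rw [toE_apply, Real.norm_eq_abs, sq_abs]

lemma C_split {ι₁ ι₂ : Type*} [Fintype ι₁] [Fintype ι₂]
    (C : Matrix (ι₁ ⊕ ι₂) (ι₁ ⊕ ι₂) ℝ) (p : ι₁ → ℝ) (q : ι₂ → ℝ) :
    C.mulVec (Sum.elim p q) =
      (C.submatrix id Sum.inl).mulVec p + (C.submatrix id Sum.inr).mulVec q := by
  funext k
  simp [Matrix.mulVec, dotProduct, Fintype.sum_sum_type, Matrix.submatrix_apply]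

lemma elim_single₁ {ι₁ ι₂ : Type*} [DecidableEq ι₁] [DecidableEq ι₂] (i : ι₁) :
    Sum.elim (Pi.single i (1:ℝ)) (0 : ι₂ → ℝ) = Pi.single (Sum.inl i : ι₁ ⊕ ι₂) 1 := by
  funext k
  cases k with
  | inl j =>
    simp only [Sum.elim_inl]
    by_cases h : j = i
    · subst h; simp
    · rw [Pi.single_apply, Pi.single_apply, if_neg h, if_neg (by simp [h])]
  | inr j => simp

lemma elim_single₂ {ι₁ ι₂ : Type*} [DecidableEq ι₁] [DecidableEq ι₂] (i : ι₂) :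
    Sum.elim (0 : ι₁ → ℝ) (Pi.single i (1:ℝ)) = Pi.single (Sum.inr i : ι₁ ⊕ ι₂) 1 := by
  funext k
  cases k with
  | inl j => simp
  | inr j =>
    simp only [Sum.elim_inr]
    by_cases h : j = i
    · subst h; simp
    · rw [Pi.single_apply, Pi.single_apply, if_neg h, if_neg (by simp [h])]

variable {ι₁ ι₂ : Type*} [Fintype ι₁] [Fintype ι₂] [DecidableEq ι₁] [DecidableEq ι₂]

lemma lower_bound {K₁ : Set (ι₁ → ℝ)} {K₂ : Set (ι₂ → ℝ)}
    (hne₁ : K₁.Nonempty) (hne₂ : K₂.Nonempty)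
    {r : ℝ} (hr : r ∈ GS (prodSet K₁ K₂)) :
    Gamma 2 K₁ + Gamma 2 K₂ ≤ r := by
  classical
  refine le_of_forall_pos_le_add fun ε hε => ?_
  obtain ⟨A, rfl, v, hAv⟩ := hr
  obtain ⟨r, hrdef⟩ : ∃ r', r' = Real.sqrt (trp 1 (A * Aᵀ)) := ⟨_, rfl⟩
  rw [← hrdef]
  have hr0 : 0 ≤ r := hrdef ▸ Real.sqrt_nonneg _
  have hr2 : r ^ 2 = trp 1 (A * Aᵀ) := hrdef ▸ Real.sq_sqrt (trp_one_nonneg _)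
  obtain ⟨n, hndef⟩ : ∃ n : ℕ, n = Fintype.card (ι₁ ⊕ ι₂) := ⟨_, rfl⟩
  obtain ⟨ε', hε'def⟩ : ∃ e : ℝ, e = ε^2 / (n + 1) := ⟨_, rfl⟩
  have hε'pos : 0 < ε' := by rw [hε'def]; positivity
  obtain ⟨N, hNdef⟩ : ∃ N, N = A * Aᵀ + ε' • (1 : Matrix (ι₁ ⊕ ι₂) (ι₁ ⊕ ι₂) ℝ) := ⟨_, rfl⟩
  have hNs : Nᵀ = N := by
    rw [hNdef, Matrix.transpose_add, Matrix.transpose_smul, Matrix.transpose_one,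
      Matrix.transpose_mul, Matrix.transpose_transpose]
  have hNform : ∀ z, z ⬝ᵥ N.mulVec z = (Aᵀ.mulVec z) ⬝ᵥ (Aᵀ.mulVec z) + ε' * (z ⬝ᵥ z) := by
    intro z
    rw [hNdef, Matrix.add_mulVec, dotProduct_add, Matrix.smul_mulVec,
      Matrix.one_mulVec, dotProduct_smul]
    rw [smul_eq_mul]
    congr 1
    have := dot_sq' Aᵀ z z
    rw [Matrix.transpose_transpose] at this
    exact this
  have hNpos : ∀ z, 0 ≤ z ⬝ᵥ N.mulVec z := by
    intro z
    rw [hNform]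
    have := dot_self_nonneg (Aᵀ.mulVec z)
    have := dot_self_nonneg z
    nlinarith
  have hNpd : N.PosDef := by
    refine posDef_of_real hNs fun z hz => ?_
    rw [hNform]
    have h1 := dot_self_nonneg (Aᵀ.mulVec z)
    have h2 : 0 < z ⬝ᵥ z := by
      rcases lt_or_eq_of_le (dot_self_nonneg z) with h | h
      · exact h
      · exact absurd ((dot_self_eq_zero_iff z).1 h.symm) hz
    nlinarith
  have hNdet : IsUnit N.det := isUnit_iff_ne_zero.2 (ne_of_gt hNpd.det_pos)
  obtain ⟨B, hBs, hBB, hBdet⟩ := exists_sqrt hNs hNpos hNdet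
  -- the containment K + v ⊆ B · ball
  have hKB : ∀ z ∈ prodSet K₁ K₂, ∃ u, (∑ k, u k ^ 2 ≤ 1) ∧ B.mulVec u = z + v := by
    intro z hz
    obtain ⟨u₀, hu₀, hAu₀⟩ := hAv ⟨z, hz, rfl⟩
    refine ⟨B⁻¹.mulVec (A.mulVec u₀), ?_, ?_⟩
    · -- ∑ (B⁻¹ A u₀)^2 ≤ 1
      obtain ⟨t, htdef⟩ : ∃ t : ℝ, t = (B⁻¹.mulVec (A.mulVec u₀)) ⬝ᵥ (B⁻¹.mulVec (A.mulVec u₀)) :=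
        ⟨_, rfl⟩
      have ht0 : 0 ≤ t := htdef ▸ dot_self_nonneg _
      have hBinvs : (B⁻¹)ᵀ = B⁻¹ := by rw [Matrix.transpose_nonsing_inv, hBs]
      have hBinvsq : (B⁻¹)ᵀ * B⁻¹ = N⁻¹ := by
        rw [hBinvs, ← Matrix.mul_inv_rev, hBB]
      have htN : t = (A.mulVec u₀) ⬝ᵥ N⁻¹.mulVec (A.mulVec u₀) := by
        rw [htdef, ← dot_sq' B⁻¹, hBinvsq]
      obtain ⟨w, hwdef⟩ : ∃ w, w = N⁻¹.mulVec (A.mulVec u₀) := ⟨_, rfl⟩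
      have hNw : N.mulVec w = A.mulVec u₀ := by
        rw [hwdef, Matrix.mulVec_mulVec, Matrix.mul_nonsing_inv N hNdet, Matrix.one_mulVec]
      have htw : t = w ⬝ᵥ N.mulVec w := by
        rw [hNw, htN, ← hwdef, dotProduct_comm]
      have hAw : (Aᵀ.mulVec w) ⬝ᵥ (Aᵀ.mulVec w) ≤ t := by
        rw [htw, hNform w]
        have := dot_self_nonneg w
        nlinarith
      have hta : t = (Aᵀ.mulVec w) ⬝ᵥ u₀ := by
        rw [htN, ← hwdef, dotProduct_comm, Matrix.dotProduct_mulVec,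
          ← Matrix.mulVec_transpose]
      have hcs := vec_cs (Aᵀ.mulVec w) u₀
      rw [← hta] at hcs
      have hu1 : u₀ ⬝ᵥ u₀ ≤ 1 := by
        rw [dot_self_eq_sum_sq]
        exact hu₀
      have hu0 : 0 ≤ u₀ ⬝ᵥ u₀ := dot_self_nonneg u₀
      have htle : t ≤ 1 := by nlinarith
      calc ∑ k, (B⁻¹.mulVec (A.mulVec u₀)) k ^ 2
          = t := by rw [htdef, dot_self_eq_sum_sq]
        _ ≤ 1 := htle
    · rw [Matrix.mulVec_mulVec, Matrix.mul_nonsing_inv B hBdet, Matrix.one_mulVec]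
      exact hAu₀
  -- set up C and the factor data
  obtain ⟨C, hCdef⟩ : ∃ C, C = B⁻¹ := ⟨_, rfl⟩
  have hCdet : IsUnit C.det := hCdef ▸ Matrix.isUnit_nonsing_inv_det B hBdet
  have hCB : ∀ u, C.mulVec (B.mulVec u) = u := by
    intro u
    rw [hCdef, Matrix.mulVec_mulVec, Matrix.nonsing_inv_mul B hBdet, Matrix.one_mulVec]
  obtain ⟨C₁, hC₁def⟩ : ∃ C₁, C₁ = C.submatrix id Sum.inl := ⟨_, rfl⟩
  obtain ⟨C₂, hC₂def⟩ : ∃ C₂, C₂ = C.submatrix id Sum.inr := ⟨_, rfl⟩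
  obtain ⟨v₁, hv₁def⟩ : ∃ v₁ : ι₁ → ℝ, v₁ = fun i => v (Sum.inl i) := ⟨_, rfl⟩
  obtain ⟨v₂, hv₂def⟩ : ∃ v₂ : ι₂ → ℝ, v₂ = fun j => v (Sum.inr j) := ⟨_, rfl⟩
  have hsplit : ∀ (p : ι₁ → ℝ) (q : ι₂ → ℝ),
      C.mulVec (Sum.elim p q) = C₁.mulVec p + C₂.mulVec q := by
    intro p q
    rw [hC₁def, hC₂def]
    exact C_split C p q
  have helim : ∀ (x : ι₁ → ℝ) (y : ι₂ → ℝ), Sum.elim x y + v = Sum.elim (x + v₁) (y + v₂) := by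
    intro x y
    funext k
    cases k with
    | inl i => simp [hv₁def]
    | inr j => simp [hv₂def]
  -- the two subsets of Euclidean space
  obtain ⟨S, hSdef⟩ : ∃ S : Set (EuclideanSpace ℝ (ι₁ ⊕ ι₂)),
      S = (fun x : ι₁ → ℝ => toE (C₁.mulVec (x + v₁))) '' K₁ := ⟨_, rfl⟩
  obtain ⟨T, hTdef⟩ : ∃ T : Set (EuclideanSpace ℝ (ι₁ ⊕ ι₂)),
      T = (fun y : ι₂ → ℝ => toE (C₂.mulVec (y + v₂))) '' K₂ := ⟨_, rfl⟩
  have hSne : S.Nonempty := by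
    obtain ⟨x, hx⟩ := hne₁
    rw [hSdef]
    exact ⟨_, ⟨x, hx, rfl⟩⟩
  have hTne : T.Nonempty := by
    obtain ⟨y, hy⟩ := hne₂
    rw [hTdef]
    exact ⟨_, ⟨y, hy, rfl⟩⟩
  have hST : ∀ a ∈ S, ∀ b ∈ T, ‖a + b‖ ≤ 1 := by
    rw [hSdef, hTdef]
    rintro _ ⟨x, hx, rfl⟩ _ ⟨y, hy, rfl⟩
    obtain ⟨u, hu, hBu⟩ := hKB (Sum.elim x y) ⟨hx, hy⟩
    have hab : toE (C₁.mulVec (x + v₁)) + toE (C₂.mulVec (y + v₂)) = toE u := by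
      rw [← map_add, ← hsplit, ← helim, hBu.symm, hCB]
    rw [hab]
    have h1 : ‖toE u‖ ^ 2 ≤ 1 := by rw [norm_toE_sq]; exact hu
    nlinarith [norm_nonneg (toE u)]
  obtain ⟨V, hVdef⟩ : ∃ V : Submodule ℝ (EuclideanSpace ℝ (ι₁ ⊕ ι₂)),
      V = LinearMap.range ((toE : _ ≃ₗ[ℝ] _).toLinearMap ∘ₗ Matrix.mulVecLin C₁) := ⟨_, rfl⟩
  obtain ⟨W, hWdef⟩ : ∃ W : Submodule ℝ (EuclideanSpace ℝ (ι₁ ⊕ ι₂)),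
      W = LinearMap.range ((toE : _ ≃ₗ[ℝ] _).toLinearMap ∘ₗ Matrix.mulVecLin C₂) := ⟨_, rfl⟩
  have hSV : S ⊆ (V : Set _) := by
    rw [hSdef, hVdef]
    rintro _ ⟨x, hx, rfl⟩
    exact ⟨x + v₁, by simp [Matrix.mulVecLin_apply]⟩
  have hTW : T ⊆ (W : Set _) := by
    rw [hTdef, hWdef]
    rintro _ ⟨y, hy, rfl⟩
    exact ⟨y + v₂, by simp [Matrix.mulVecLin_apply]⟩
  obtain ⟨c, hcV, d, hdW, ρ₁, ρ₂, hρ₁0, hρ₂0, hρsq, hSc, hTd⟩ :=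
    cheb_main S T hSne hTne hST V W hSV hTW
  rw [hVdef] at hcV
  rw [hWdef] at hdW
  obtain ⟨w₁, hw₁⟩ := LinearMap.mem_range.1 hcV
  obtain ⟨w₂, hw₂⟩ := LinearMap.mem_range.1 hdW
  simp only [LinearMap.comp_apply, Matrix.mulVecLin_apply, LinearEquiv.coe_coe] at hw₁ hw₂
  -- the quadratic forms
  obtain ⟨Y₁, hY₁def⟩ : ∃ Y₁, Y₁ = C₁ᵀ * C₁ := ⟨_, rfl⟩
  obtain ⟨Y₂, hY₂def⟩ : ∃ Y₂, Y₂ = C₂ᵀ * C₂ := ⟨_, rfl⟩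
  have hY₁s : Y₁ᵀ = Y₁ := by
    rw [hY₁def, Matrix.transpose_mul, Matrix.transpose_transpose]
  have hY₂s : Y₂ᵀ = Y₂ := by
    rw [hY₂def, Matrix.transpose_mul, Matrix.transpose_transpose]
  have hC₁inj : ∀ ξ : ι₁ → ℝ, C₁.mulVec ξ = 0 → ξ = 0 := by
    intro ξ h
    have h1 : C.mulVec (Sum.elim ξ 0) = 0 := by
      rw [hsplit, Matrix.mulVec_zero, add_zero, h]
    have h2 := mulVec_inj hCdet h1
    funext i
    exact congrFun h2 (Sum.inl i)
  have hC₂inj : ∀ ξ : ι₂ → ℝ, C₂.mulVec ξ = 0 → ξ = 0 := by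
    intro ξ h
    have h1 : C.mulVec (Sum.elim 0 ξ) = 0 := by
      rw [hsplit, Matrix.mulVec_zero, zero_add, h]
    have h2 := mulVec_inj hCdet h1
    funext j
    exact congrFun h2 (Sum.inr j)
  have hY₁form : ∀ p q, p ⬝ᵥ Y₁.mulVec q = (C₁.mulVec p) ⬝ᵥ (C₁.mulVec q) := by
    intro p q; rw [hY₁def, dot_sq']
  have hY₂form : ∀ p q, p ⬝ᵥ Y₂.mulVec q = (C₂.mulVec p) ⬝ᵥ (C₂.mulVec q) := by
    intro p q; rw [hY₂def, dot_sq']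
  have hY₁pos : ∀ ξ, 0 ≤ ξ ⬝ᵥ Y₁.mulVec ξ := fun ξ => (hY₁form ξ ξ) ▸ dot_self_nonneg _
  have hY₂pos : ∀ ξ, 0 ≤ ξ ⬝ᵥ Y₂.mulVec ξ := fun ξ => (hY₂form ξ ξ) ▸ dot_self_nonneg _
  have hY₁pd : Y₁.PosDef := by
    refine posDef_of_real hY₁s fun ξ hξ => ?_
    rcases lt_or_eq_of_le (hY₁pos ξ) with h | h
    · exact h
    · exfalso
      rw [hY₁form] at h
      exact hξ (hC₁inj ξ ((dot_self_eq_zero_iff _).1 h.symm))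
  have hY₂pd : Y₂.PosDef := by
    refine posDef_of_real hY₂s fun ξ hξ => ?_
    rcases lt_or_eq_of_le (hY₂pos ξ) with h | h
    · exact h
    · exfalso
      rw [hY₂form] at h
      exact hξ (hC₂inj ξ ((dot_self_eq_zero_iff _).1 h.symm))
  have hY₁det : IsUnit Y₁.det := isUnit_iff_ne_zero.2 (ne_of_gt hY₁pd.det_pos)
  have hY₂det : IsUnit Y₂.det := isUnit_iff_ne_zero.2 (ne_of_gt hY₂pd.det_pos)
  have hY₁invpos := inv_dot_nonneg hY₁det hY₁pos
  have hY₂invpos := inv_dot_nonneg hY₂det hY₂pos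
  -- radius bounds in quadratic-form language
  have hξ₁ : ∀ x ∈ K₁, (x + v₁ - w₁) ⬝ᵥ Y₁.mulVec (x + v₁ - w₁) ≤ ρ₁ ^ 2 := by
    intro x hx
    have h1 : ‖toE (C₁.mulVec (x + v₁)) - c‖ ≤ ρ₁ := hSc _ (hSdef ▸ ⟨x, hx, rfl⟩)
    have h2 : toE (C₁.mulVec (x + v₁)) - c = toE (C₁.mulVec (x + v₁ - w₁)) := by
      rw [← hw₁, ← map_sub, ← Matrix.mulVec_sub]
    rw [h2] at h1
    have h3 : ‖toE (C₁.mulVec (x + v₁ - w₁))‖ ^ 2 ≤ ρ₁ ^ 2 :=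
      pow_le_pow_left₀ (norm_nonneg _) h1 2
    rw [norm_toE_sq] at h3
    rw [← dot_self_eq_sum_sq] at h3
    rw [hY₁form]
    exact h3
  have hξ₂ : ∀ y ∈ K₂, (y + v₂ - w₂) ⬝ᵥ Y₂.mulVec (y + v₂ - w₂) ≤ ρ₂ ^ 2 := by
    intro y hy
    have h1 : ‖toE (C₂.mulVec (y + v₂)) - d‖ ≤ ρ₂ := hTd _ (hTdef ▸ ⟨y, hy, rfl⟩)
    have h2 : toE (C₂.mulVec (y + v₂)) - d = toE (C₂.mulVec (y + v₂ - w₂)) := by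
      rw [← hw₂, ← map_sub, ← Matrix.mulVec_sub]
    rw [h2] at h1
    have h3 : ‖toE (C₂.mulVec (y + v₂ - w₂))‖ ^ 2 ≤ ρ₂ ^ 2 :=
      pow_le_pow_left₀ (norm_nonneg _) h1 2
    rw [norm_toE_sq] at h3
    rw [← dot_self_eq_sum_sq] at h3
    rw [hY₂form]
    exact h3
  -- square roots of the inverse quadratic forms
  have hY₁invs : (Y₁⁻¹)ᵀ = Y₁⁻¹ := by rw [Matrix.transpose_nonsing_inv, hY₁s]
  have hY₂invs : (Y₂⁻¹)ᵀ = Y₂⁻¹ := by rw [Matrix.transpose_nonsing_inv, hY₂s]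
  have hY₁invdet : IsUnit Y₁⁻¹.det := Matrix.isUnit_nonsing_inv_det Y₁ hY₁det
  have hY₂invdet : IsUnit Y₂⁻¹.det := Matrix.isUnit_nonsing_inv_det Y₂ hY₂det
  obtain ⟨G₁, hG₁s, hG₁G₁, hG₁det⟩ := exists_sqrt hY₁invs hY₁invpos hY₁invdet
  obtain ⟨G₂, hG₂s, hG₂G₂, hG₂det⟩ := exists_sqrt hY₂invs hY₂invpos hY₂invdet
  have hmem₁ : Real.sqrt (trp 1 ((ρ₁ • G₁) * (ρ₁ • G₁)ᵀ)) ∈ GS K₁ := by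
    refine ⟨ρ₁ • G₁, rfl, v₁ - w₁, ?_⟩
    rintro _ ⟨x, hx, rfl⟩
    have hξ := hξ₁ x hx
    have hxv : x + (v₁ - w₁) = x + v₁ - w₁ := by abel
    rcases eq_or_lt_of_le hρ₁0 with h0 | h0
    · have hzero : x + v₁ - w₁ = 0 := by
        apply hC₁inj
        apply (dot_self_eq_zero_iff _).1
        have hle : (C₁.mulVec (x + v₁ - w₁)) ⬝ᵥ (C₁.mulVec (x + v₁ - w₁)) ≤ 0 := by
          rw [← hY₁form]
          rw [← h0] at hξ
          simpa using hξ
        exact le_antisymm hle (dot_self_nonneg _)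
      refine ⟨0, ?_, ?_⟩
      · show ∑ k, ((0:ι₁→ℝ) k) ^ 2 ≤ 1
        simp
      · show (ρ₁ • G₁).mulVec 0 = (fun x => x + (v₁ - w₁)) x
        rw [Matrix.mulVec_zero]
        show (0:ι₁→ℝ) = x + (v₁ - w₁)
        rw [hxv, hzero]
    · refine ⟨ρ₁⁻¹ • (G₁⁻¹.mulVec (x + v₁ - w₁)), ?_, ?_⟩
      · show ∑ k, ((ρ₁⁻¹ • (G₁⁻¹.mulVec (x + v₁ - w₁))) k) ^ 2 ≤ 1
        rw [← dot_self_eq_sum_sq, smul_dotProduct, dotProduct_smul,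
          smul_eq_mul, smul_eq_mul]
        have hG₁invs : (G₁⁻¹)ᵀ = G₁⁻¹ := by rw [Matrix.transpose_nonsing_inv, hG₁s]
        have hdd : (G₁⁻¹.mulVec (x + v₁ - w₁)) ⬝ᵥ (G₁⁻¹.mulVec (x + v₁ - w₁))
            = (x + v₁ - w₁) ⬝ᵥ Y₁.mulVec (x + v₁ - w₁) := by
          rw [← dot_sq' G₁⁻¹, hG₁invs, ← Matrix.mul_inv_rev, hG₁G₁,
            Matrix.nonsing_inv_nonsing_inv Y₁ hY₁det]
        rw [hdd]
        have h2 : (0:ℝ) ≤ ρ₁⁻¹ := by positivity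
        calc ρ₁⁻¹ * (ρ₁⁻¹ * ((x + v₁ - w₁) ⬝ᵥ Y₁.mulVec (x + v₁ - w₁)))
            ≤ ρ₁⁻¹ * (ρ₁⁻¹ * ρ₁ ^ 2) :=
              mul_le_mul_of_nonneg_left (mul_le_mul_of_nonneg_left hξ h2) h2
          _ = 1 := by rw [pow_two]; field_simp
      · show (ρ₁ • G₁).mulVec (ρ₁⁻¹ • (G₁⁻¹.mulVec (x + v₁ - w₁))) = (fun x => x + (v₁ - w₁)) x
        rw [Matrix.smul_mulVec, Matrix.mulVec_smul, Matrix.mulVec_mulVec,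
          Matrix.mul_nonsing_inv G₁ hG₁det, Matrix.one_mulVec, smul_smul,
          mul_inv_cancel₀ h0.ne', one_smul]
        exact hxv.symm
  have hmem₂ : Real.sqrt (trp 1 ((ρ₂ • G₂) * (ρ₂ • G₂)ᵀ)) ∈ GS K₂ := by
    refine ⟨ρ₂ • G₂, rfl, v₂ - w₂, ?_⟩
    rintro _ ⟨y, hy, rfl⟩
    have hξ := hξ₂ y hy
    have hxv : y + (v₂ - w₂) = y + v₂ - w₂ := by abel
    rcases eq_or_lt_of_le hρ₂0 with h0 | h0
    · have hzero : y + v₂ - w₂ = 0 := by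
        apply hC₂inj
        apply (dot_self_eq_zero_iff _).1
        have hle : (C₂.mulVec (y + v₂ - w₂)) ⬝ᵥ (C₂.mulVec (y + v₂ - w₂)) ≤ 0 := by
          rw [← hY₂form]
          rw [← h0] at hξ
          simpa using hξ
        exact le_antisymm hle (dot_self_nonneg _)
      refine ⟨0, ?_, ?_⟩
      · show ∑ k, ((0:ι₂→ℝ) k) ^ 2 ≤ 1
        simp
      · show (ρ₂ • G₂).mulVec 0 = (fun y => y + (v₂ - w₂)) y
        rw [Matrix.mulVec_zero]
        show (0:ι₂→ℝ) = y + (v₂ - w₂)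
        rw [hxv, hzero]
    · refine ⟨ρ₂⁻¹ • (G₂⁻¹.mulVec (y + v₂ - w₂)), ?_, ?_⟩
      · show ∑ k, ((ρ₂⁻¹ • (G₂⁻¹.mulVec (y + v₂ - w₂))) k) ^ 2 ≤ 1
        rw [← dot_self_eq_sum_sq, smul_dotProduct, dotProduct_smul,
          smul_eq_mul, smul_eq_mul]
        have hG₂invs : (G₂⁻¹)ᵀ = G₂⁻¹ := by rw [Matrix.transpose_nonsing_inv, hG₂s]
        have hdd : (G₂⁻¹.mulVec (y + v₂ - w₂)) ⬝ᵥ (G₂⁻¹.mulVec (y + v₂ - w₂))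
            = (y + v₂ - w₂) ⬝ᵥ Y₂.mulVec (y + v₂ - w₂) := by
          rw [← dot_sq' G₂⁻¹, hG₂invs, ← Matrix.mul_inv_rev, hG₂G₂,
            Matrix.nonsing_inv_nonsing_inv Y₂ hY₂det]
        rw [hdd]
        have h2 : (0:ℝ) ≤ ρ₂⁻¹ := by positivity
        calc ρ₂⁻¹ * (ρ₂⁻¹ * ((y + v₂ - w₂) ⬝ᵥ Y₂.mulVec (y + v₂ - w₂)))
            ≤ ρ₂⁻¹ * (ρ₂⁻¹ * ρ₂ ^ 2) :=
              mul_le_mul_of_nonneg_left (mul_le_mul_of_nonneg_left hξ h2) h2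
          _ = 1 := by rw [pow_two]; field_simp
      · show (ρ₂ • G₂).mulVec (ρ₂⁻¹ • (G₂⁻¹.mulVec (y + v₂ - w₂))) = (fun y => y + (v₂ - w₂)) y
        rw [Matrix.smul_mulVec, Matrix.mulVec_smul, Matrix.mulVec_mulVec,
          Matrix.mul_nonsing_inv G₂ hG₂det, Matrix.one_mulVec, smul_smul,
          mul_inv_cancel₀ h0.ne', one_smul]
        exact hxv.symm
  obtain ⟨t₁, ht₁def⟩ : ∃ t, t = trp 1 Y₁⁻¹ := ⟨_, rfl⟩
  obtain ⟨t₂, ht₂def⟩ : ∃ t, t = trp 1 Y₂⁻¹ := ⟨_, rfl⟩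
  have ht₁0 : 0 ≤ t₁ := ht₁def ▸ trp_one_nonneg _
  have ht₂0 : 0 ≤ t₂ := ht₂def ▸ trp_one_nonneg _
  have hval₁ : Real.sqrt (trp 1 ((ρ₁ • G₁) * (ρ₁ • G₁)ᵀ)) = ρ₁ * Real.sqrt t₁ := by
    have h1 : (ρ₁ • G₁) * (ρ₁ • G₁)ᵀ = (ρ₁ ^ 2) • Y₁⁻¹ := by
      rw [Matrix.transpose_smul, hG₁s, Matrix.smul_mul, Matrix.mul_smul, hG₁G₁,
        smul_smul, pow_two]
    rw [h1]
    have h2 : trp 1 ((ρ₁ ^ 2) • Y₁⁻¹) = ρ₁ ^ 2 * trp 1 Y₁⁻¹ := by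
      rw [trp_one, trp_one, Finset.mul_sum]
      refine Finset.sum_congr rfl fun i _ => ?_
      rw [Matrix.smul_apply, smul_eq_mul, abs_mul, abs_of_nonneg (sq_nonneg ρ₁)]
    rw [h2, ← ht₁def, Real.sqrt_mul (sq_nonneg ρ₁), Real.sqrt_sq hρ₁0]
  have hval₂ : Real.sqrt (trp 1 ((ρ₂ • G₂) * (ρ₂ • G₂)ᵀ)) = ρ₂ * Real.sqrt t₂ := by
    have h1 : (ρ₂ • G₂) * (ρ₂ • G₂)ᵀ = (ρ₂ ^ 2) • Y₂⁻¹ := by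
      rw [Matrix.transpose_smul, hG₂s, Matrix.smul_mul, Matrix.mul_smul, hG₂G₂,
        smul_smul, pow_two]
    rw [h1]
    have h2 : trp 1 ((ρ₂ ^ 2) • Y₂⁻¹) = ρ₂ ^ 2 * trp 1 Y₂⁻¹ := by
      rw [trp_one, trp_one, Finset.mul_sum]
      refine Finset.sum_congr rfl fun i _ => ?_
      rw [Matrix.smul_apply, smul_eq_mul, abs_mul, abs_of_nonneg (sq_nonneg ρ₂)]
    rw [h2, ← ht₂def, Real.sqrt_mul (sq_nonneg ρ₂), Real.sqrt_sq hρ₂0]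
  have hΓ₁ : Gamma 2 K₁ ≤ ρ₁ * Real.sqrt t₁ := hval₁ ▸ Gamma_two_le hmem₁
  have hΓ₂ : Gamma 2 K₂ ≤ ρ₂ * Real.sqrt t₂ := hval₂ ▸ Gamma_two_le hmem₂
  -- the trace inequality
  obtain ⟨X, hXdef⟩ : ∃ X, X = Cᵀ * C := ⟨_, rfl⟩
  have hXs : Xᵀ = X := by rw [hXdef, Matrix.transpose_mul, Matrix.transpose_transpose]
  have hXform : ∀ p q, p ⬝ᵥ X.mulVec q = (C.mulVec p) ⬝ᵥ (C.mulVec q) := fun p q => by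
    rw [hXdef, dot_sq']
  have hXpos : ∀ z, 0 ≤ z ⬝ᵥ X.mulVec z := fun z => (hXform z z) ▸ dot_self_nonneg _
  have hXdet : IsUnit X.det := by
    rw [hXdef, Matrix.det_mul, Matrix.det_transpose]
    exact hCdet.mul hCdet
  have hXinv : X⁻¹ = N := by
    have h1 : X = N⁻¹ := by
      rw [hXdef, hCdef, Matrix.transpose_nonsing_inv, hBs, ← Matrix.mul_inv_rev, hBB]
    rw [h1, Matrix.nonsing_inv_nonsing_inv N hNdet]
  have hXinvpos : ∀ z, 0 ≤ z ⬝ᵥ X⁻¹.mulVec z := by rw [hXinv]; exact hNpos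
  have hYrel₁ : ∀ p q : ι₁ → ℝ, Sum.elim p 0 ⬝ᵥ X.mulVec (Sum.elim q 0) = p ⬝ᵥ Y₁.mulVec q := by
    intro p q
    simp only [hXform, hsplit, Matrix.mulVec_zero, add_zero, hY₁form]
  have hYrel₂ : ∀ p q : ι₂ → ℝ, Sum.elim 0 p ⬝ᵥ X.mulVec (Sum.elim 0 q) = p ⬝ᵥ Y₂.mulVec q := by
    intro p q
    simp only [hXform, hsplit, Matrix.mulVec_zero, zero_add, hY₂form]
  have hdiag₁ : ∀ i, Y₁⁻¹ i i ≤ N (Sum.inl i) (Sum.inl i) := by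
    intro i
    have h1 := block_ineq₁ hXs hXpos hXdet hXinvpos hYrel₁ hY₁det hY₁invpos (Pi.single i 1)
    rw [single_dot_diag, elim_single₁, single_dot_diag, hXinv] at h1
    exact h1
  have hdiag₂ : ∀ j, Y₂⁻¹ j j ≤ N (Sum.inr j) (Sum.inr j) := by
    intro j
    have h1 := block_ineq₂ hXs hXpos hXdet hXinvpos hYrel₂ hY₂det hY₂invpos (Pi.single j 1)
    rw [single_dot_diag, elim_single₂, single_dot_diag, hXinv] at h1
    exact h1
  have ht₁sum : t₁ = ∑ i, Y₁⁻¹ i i := by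
    rw [ht₁def, trp_one]
    exact Finset.sum_congr rfl fun i _ => abs_of_nonneg (diag_nonneg_of_dotpos hY₁invpos i)
  have ht₂sum : t₂ = ∑ j, Y₂⁻¹ j j := by
    rw [ht₂def, trp_one]
    exact Finset.sum_congr rfl fun j _ => abs_of_nonneg (diag_nonneg_of_dotpos hY₂invpos j)
  have htsum : t₁ + t₂ ≤ ∑ k, N k k := by
    rw [ht₁sum, ht₂sum, Fintype.sum_sum_type]
    exact add_le_add (Finset.sum_le_sum fun i _ => hdiag₁ i)
      (Finset.sum_le_sum fun j _ => hdiag₂ j)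
  have hNtr : ∑ k, N k k = trp 1 (A * Aᵀ) + ε' * n := by
    have h1 : ∀ k, N k k = (A * Aᵀ) k k + ε' := by
      intro k
      rw [hNdef, Matrix.add_apply, Matrix.smul_apply, Matrix.one_apply_eq, smul_eq_mul, mul_one]
    have h2 : ∀ k, (A * Aᵀ) k k = ∑ j, A k j ^ 2 := by
      intro k
      rw [Matrix.mul_apply]
      exact Finset.sum_congr rfl fun j _ => by rw [Matrix.transpose_apply, pow_two]
    rw [Finset.sum_congr rfl fun k _ => h1 k, Finset.sum_add_distrib]
    congr 1
    · rw [trp_one]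
      exact Finset.sum_congr rfl fun k _ =>
        (abs_of_nonneg (by rw [h2 k]; positivity)).symm
    · rw [Finset.sum_const, nsmul_eq_mul, hndef, Fintype.card]
      ring
  have hcs2 : ρ₁ * Real.sqrt t₁ + ρ₂ * Real.sqrt t₂ ≤ Real.sqrt (t₁ + t₂) := by
    have s₁ := Real.sq_sqrt ht₁0
    have s₂ := Real.sq_sqrt ht₂0
    have s₁0 := Real.sqrt_nonneg t₁
    have s₂0 := Real.sqrt_nonneg t₂
    have q0 := Real.sqrt_nonneg (t₁ + t₂)
    have q2 := Real.sq_sqrt (add_nonneg ht₁0 ht₂0)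
    nlinarith [sq_nonneg (ρ₁ * Real.sqrt t₂ - ρ₂ * Real.sqrt t₁),
      mul_nonneg hρ₁0 s₁0, mul_nonneg hρ₂0 s₂0, hρsq, ht₁0, ht₂0,
      mul_nonneg (mul_nonneg hρ₁0 hρ₂0) (mul_nonneg s₁0 s₂0),
      sq_nonneg (ρ₁ * Real.sqrt t₁ + ρ₂ * Real.sqrt t₂ - Real.sqrt (t₁ + t₂)),
      sq_nonneg (ρ₁ * Real.sqrt t₁ + ρ₂ * Real.sqrt t₂ + Real.sqrt (t₁ + t₂))]
  have hfinal2 : Real.sqrt (t₁ + t₂) ≤ Real.sqrt (r ^ 2 + ε' * n) := by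
    apply Real.sqrt_le_sqrt
    have h1 := htsum.trans_eq hNtr
    rw [← hr2] at h1
    linarith
  have hfinal3 : Real.sqrt (r ^ 2 + ε' * n) ≤ r + ε := by
    have hεn : ε' * n ≤ ε ^ 2 := by
      rw [hε'def, div_mul_eq_mul_div, div_le_iff₀ (by positivity)]
      nlinarith [sq_nonneg ε]
    have h1 : r ^ 2 + ε' * n ≤ (r + ε) ^ 2 := by nlinarith
    calc Real.sqrt (r ^ 2 + ε' * n) ≤ Real.sqrt ((r + ε) ^ 2) := Real.sqrt_le_sqrt h1
      _ = r + ε := Real.sqrt_sq (by linarith)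
  linarith

end Lower

section Final

variable {ι₁ ι₂ : Type*} [Fintype ι₁] [Fintype ι₂] [DecidableEq ι₁] [DecidableEq ι₂]

lemma prod_bounded {K₁ : Set (ι₁ → ℝ)} {K₂ : Set (ι₂ → ℝ)}
    (h₁ : IsBounded K₁) (h₂ : IsBounded K₂) : IsBounded (prodSet K₁ K₂) := by
  obtain ⟨R₁, hR₁⟩ := (Metric.isBounded_iff_subset_closedBall 0).1 h₁
  obtain ⟨R₂, hR₂⟩ := (Metric.isBounded_iff_subset_closedBall 0).1 h₂
  rw [Metric.isBounded_iff_subset_closedBall 0]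
  refine ⟨max (max R₁ R₂) 0, fun z hz => ?_⟩
  have hz₁ : ‖fun i => z (Sum.inl i)‖ ≤ R₁ := by
    have := hR₁ hz.1
    rw [Metric.mem_closedBall, dist_eq_norm, sub_zero] at this
    exact this
  have hz₂ : ‖fun j => z (Sum.inr j)‖ ≤ R₂ := by
    have := hR₂ hz.2
    rw [Metric.mem_closedBall, dist_eq_norm, sub_zero] at this
    exact this
  rw [Metric.mem_closedBall, dist_eq_norm, sub_zero]
  rw [pi_norm_le_iff_of_nonneg (le_max_right _ _)]
  intro k
  cases k with
  | inl i =>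
    have h3 : ‖(fun i => z (Sum.inl i) : ι₁ → ℝ) i‖ ≤ ‖(fun i => z (Sum.inl i) : ι₁ → ℝ)‖ :=
      norm_le_pi_norm (fun i => z (Sum.inl i) : ι₁ → ℝ) i
    calc ‖z (Sum.inl i)‖ ≤ ‖(fun i => z (Sum.inl i) : ι₁ → ℝ)‖ := h3
      _ ≤ R₁ := hz₁
      _ ≤ _ := le_max_of_le_left (le_max_left _ _)
  | inr j =>
    have h3 : ‖(fun j => z (Sum.inr j) : ι₂ → ℝ) j‖ ≤ ‖(fun j => z (Sum.inr j) : ι₂ → ℝ)‖ :=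
      norm_le_pi_norm (fun j => z (Sum.inr j) : ι₂ → ℝ) j
    calc ‖z (Sum.inr j)‖ ≤ ‖(fun j => z (Sum.inr j) : ι₂ → ℝ)‖ := h3
      _ ≤ R₂ := hz₂
      _ ≤ _ := le_max_of_le_left (le_max_right _ _)

end Final


/-- product formula for `Γ₂`:
`Γ₂(K₁ × K₂) = Γ₂(K₁) + Γ₂(K₂)`. -/
theorem Gamma_two_prod {d₁ d₂ : ℕ} (K₁ : Set (Fin d₁ → ℝ))
    (K₂ : Set (Fin d₂ → ℝ)) (h₁ : IsBounded K₁) (h₂ : IsBounded K₂)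
    (hne₁ : K₁.Nonempty) (hne₂ : K₂.Nonempty) :
    Gamma 2 {z : (Fin d₁ ⊕ Fin d₂) → ℝ |
        (fun i => z (Sum.inl i)) ∈ K₁ ∧ (fun j => z (Sum.inr j)) ∈ K₂} =
      Gamma 2 K₁ + Gamma 2 K₂ := by
  have hKey : {z : (Fin d₁ ⊕ Fin d₂) → ℝ |
      (fun i => z (Sum.inl i)) ∈ K₁ ∧ (fun j => z (Sum.inr j)) ∈ K₂} = prodSet K₁ K₂ := rfl
  rw [hKey]
  apply le_antisymm
  · refine le_of_forall_pos_le_add fun ε hε => ?_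
    have hS₁ := GS_nonempty h₁
    have hS₂ := GS_nonempty h₂
    obtain ⟨r₁, hr₁mem, hr₁⟩ := exists_lt_of_csInf_lt hS₁
      (show sInf (GS K₁) < Gamma 2 K₁ + ε/4 by rw [← Gamma_two_eq]; linarith)
    obtain ⟨r₂, hr₂mem, hr₂⟩ := exists_lt_of_csInf_lt hS₂
      (show sInf (GS K₂) < Gamma 2 K₂ + ε/4 by rw [← Gamma_two_eq]; linarith)
    obtain ⟨rr, hrrmem, hrrle⟩ := GS_prod_mem hr₁mem hr₂mem (show (0:ℝ) < ε/8 by linarith)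
    have hle := Gamma_two_le hrrmem
    linarith
  · rw [Gamma_two_eq (prodSet K₁ K₂)]
    exact le_csInf (GS_nonempty (prod_bounded h₁ h₂)) fun r hrr => lower_bound hne₁ hne₂ hrr
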